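/- arXiv:1603.08332 — 4 statements merged into one kernel-verified Lean document; each statement's English description precedes it below -/
import Mathlib

section
/- For any positive integer p and nonnegative integers m, n, the stuffle product z_p^m * z_p^n equals the sum over i from 0 to min(m,n) of binom(m+n-2i, m-i) times the sum of all words containing the letter z_p exactly (m+n-2i) times and the letter z_{2p} exactly i times. -/
open MonoidAlgebra Finset

abbrev H : Type := MonoidAlgebra ℚ (FreeMonoid ℕ+)

noncomputable def word (w : List ℕ+) : H := MonoidAlgebra.single (FreeMonoid.ofList w) 1

noncomputable def z (k : ℕ+) : H := word [k]

noncomputable def st : List ℕ+ → List ℕ+ → H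
  | [], w => word w
  | k :: w1, [] => word (k :: w1)
  | k :: w1, l :: w2 =>
      z k * st w1 (l :: w2) + z l * st (k :: w1) w2 + z (k + l) * st w1 w2
termination_by a b => a.length + b.length
decreasing_by all_goals (simp; try omega)

lemma word_cons (k : ℕ+) (w : List ℕ+) : word (k :: w) = z k * word w := by
  simp [word, z, MonoidAlgebra.single_mul_single]

lemma st_nil_left (w : List ℕ+) : st [] w = word w := by rw [st]
lemma st_nil_right (w : List ℕ+) : st w [] = word w := by cases w <;> rw [st]
lemma st_cons (k l : ℕ+) (w1 w2 : List ℕ+) :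
    st (k :: w1) (l :: w2) =
      z k * st w1 (l :: w2) + z l * st (k :: w1) w2 + z (k + l) * st w1 w2 := by rw [st]

lemma st_comm_aux : ∀ (N : ℕ) (w1 w2 : List ℕ+), w1.length + w2.length ≤ N →
    st w1 w2 = st w2 w1 := by
  intro N
  induction N with
  | zero =>
    intro w1 w2 h
    have h1 : w1 = [] := by cases w1 <;> simp_all
    subst h1
    rw [st_nil_left, st_nil_right]
  | succ N ih =>
    intro w1 w2 h
    match w1, w2 with
    | [], w2 => rw [st_nil_left, st_nil_right]
    | w1, [] => rw [st_nil_left, st_nil_right]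
    | k :: w1, l :: w2 =>
      simp only [List.length_cons] at h
      rw [st_cons, st_cons, add_comm k l,
        ih w1 (l :: w2) (by simp; omega), ih (k :: w1) w2 (by simp; omega),
        ih w1 w2 (by omega)]
      abel

lemma st_comm (w1 w2 : List ℕ+) : st w1 w2 = st w2 w1 :=
  st_comm_aux (w1.length + w2.length) w1 w2 le_rfl

noncomputable def WW (p : ℕ+) (N b : ℕ) : H :=
  ∑ S ∈ Finset.powersetCard b (Finset.univ : Finset (Fin N)),
    word (List.ofFn fun j => if j ∈ S then 2 * p else p)

lemma WW_cast (p : ℕ+) {N N' : ℕ} (h : N = N') (b : ℕ) : WW p N b = WW p N' b := by subst h; rfl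

lemma WW_zero (p : ℕ+) (N : ℕ) : WW p N 0 = word (List.replicate N p) := by
  simp [WW, List.ofFn_const]

lemma WW_eq_zero (p : ℕ+) {N b : ℕ} (h : N < b) : WW p N b = 0 := by
  rw [WW, Finset.powersetCard_eq_empty.2 (by simpa using h), Finset.sum_empty]

lemma mem_mapE {α β : Type*} {f : α ↪ β} {s : Finset α} {b : β} :
    b ∈ (Finset.mapEmbedding f).toEmbedding s ↔ ∃ a ∈ s, f a = b := Finset.mem_map

lemma WW_split (p : ℕ+) (N b : ℕ) :
    WW p (N+1) (b+1) = z p * WW p N (b+1) + z (2*p) * WW p N b := by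
  rw [WW, Fin.univ_succ, Finset.cons_eq_insert,
    Finset.powersetCard_succ_insert (by simp), Finset.sum_union, powersetCard_map,
    powersetCard_map, Finset.sum_map, Finset.sum_image, Finset.sum_map]
  · rw [WW, WW, Finset.mul_sum, Finset.mul_sum]
    congr 1
    · refine Finset.sum_congr rfl fun S hS => ?_
      rw [List.ofFn_succ, word_cons]
      congr 2
      · rw [if_neg]
        simp only [mem_mapE]
        rintro ⟨a, -, ha⟩
        exact Fin.succ_ne_zero a ha
      · refine congrArg List.ofFn (funext fun i => ?_)
        simp only [mem_mapE]
        simp [Fin.succ_inj]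
    · refine Finset.sum_congr rfl fun S hS => ?_
      rw [List.ofFn_succ, word_cons]
      congr 2
      · simp
      · refine congrArg List.ofFn (funext fun i => ?_)
        simp only [Finset.mem_insert, mem_mapE]
        simp [Fin.succ_ne_zero, Fin.succ_inj]
  · intro x hx y hy hxy
    have hx0 : (0 : Fin (N+1)) ∉ x := by
      obtain ⟨x', -, rfl⟩ := Finset.mem_map.1 hx
      simp only [mem_mapE]
      rintro ⟨a, -, ha⟩; exact Fin.succ_ne_zero a ha
    have hy0 : (0 : Fin (N+1)) ∉ y := by
      obtain ⟨y', -, rfl⟩ := Finset.mem_map.1 hy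
      simp only [mem_mapE]
      rintro ⟨a, -, ha⟩; exact Fin.succ_ne_zero a ha
    rw [← Finset.erase_insert hx0, ← Finset.erase_insert hy0, hxy]
  · rw [Finset.disjoint_left]
    rintro S hS hS'
    rw [Finset.mem_image] at hS'
    obtain ⟨T, hT, rfl⟩ := hS'
    rw [Finset.mem_powersetCard] at hS
    have := hS.1 (Finset.mem_insert_self 0 T)
    simp at this

lemma WW_split0 (p : ℕ+) (N : ℕ) : WW p (N+1) 0 = z p * WW p N 0 := by
  rw [WW_zero, WW_zero, List.replicate_succ, word_cons]

lemma choose_cast_eq {a b c d : ℕ} (h1 : a = c) (h2 : b = d) :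
    ((a.choose b : ℕ) : ℚ) = ((c.choose d : ℕ) : ℚ) := by subst h1; subst h2; rfl

lemma WWt_congr' (p : ℕ+) (u : H) {a b c d N N' : ℕ} (i : ℕ) (h1 : a = c) (h2 : b = d)
    (h3 : N = N') :
    ((a.choose b : ℕ) : ℚ) • (u * WW p N i) = ((c.choose d : ℕ) : ℚ) • (u * WW p N' i) := by
  subst h1; subst h2; subst h3; rfl

lemma WWt_congr (p : ℕ+) {a b c d N N' : ℕ} (i : ℕ) (h1 : a = c) (h2 : b = d) (h3 : N = N') :
    ((a.choose b : ℕ) : ℚ) • WW p N i = ((c.choose d : ℕ) : ℚ) • WW p N' i := by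
  subst h1; subst h2; subst h3; rfl

noncomputable def RHS (p : ℕ+) (m n : ℕ) : H :=
  ∑ i ∈ Finset.range (min m n + 1), ((m+n-2*i).choose (m-i) : ℚ) • WW p (m+n-i) i

lemma RHS_zero_left (p : ℕ+) (n : ℕ) : RHS p 0 n = word (List.replicate n p) := by
  simp [RHS, WW_zero]

lemma RHS_symm (p : ℕ+) (m n : ℕ) : RHS p m n = RHS p n m := by
  rw [RHS, RHS, min_comm n m]
  refine Finset.sum_congr rfl fun i hi => ?_
  rw [Finset.mem_range] at hi
  have him : i ≤ m := by omega
  have hin : i ≤ n := by omega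
  rw [← Nat.choose_symm (n := m+n-2*i) (k := m-i) (by omega)]
  exact WWt_congr p i (by omega) (by omega) (by omega)

lemma step (p : ℕ+) (m n : ℕ) (hmn : m ≤ n)
    (hA : st (List.replicate m p) (List.replicate (n+1) p) = RHS p m (n+1))
    (hB : st (List.replicate (m+1) p) (List.replicate n p) = RHS p (m+1) n)
    (hC : st (List.replicate m p) (List.replicate n p) = RHS p m n) :
    st (List.replicate (m+1) p) (List.replicate (n+1) p) = RHS p (m+1) (n+1) := by
  have e1 : st (List.replicate (m+1) p) (List.replicate (n+1) p)
      = z p * RHS p m (n+1) + z p * RHS p (m+1) n + z (2*p) * RHS p m n := by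
    rw [show List.replicate (m+1) p = p :: List.replicate m p from rfl,
      show List.replicate (n+1) p = p :: List.replicate n p from rfl, st_cons,
      ← show List.replicate (n+1) p = p :: List.replicate n p from rfl,
      ← show List.replicate (m+1) p = p :: List.replicate m p from rfl,
      hA, hB, hC, show (p + p : ℕ+) = 2 * p from PNat.coe_injective (by push_cast; ring)]
  rw [e1]
  have key : ∀ i ∈ Finset.range (m+1),
      ((m+1+(n+1)-2*(i+1)).choose (m+1-(i+1)) : ℚ) • WW p (m+1+(n+1)-(i+1)) (i+1)
      = z p * (((m+n+2-2*(i+1)).choose (m+1-(i+1)) : ℚ) • WW p (m+n+1-(i+1)) (i+1))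
        + z (2*p) * (((m+n-2*i).choose (m-i) : ℚ) • WW p (m+n-i) i) := by
    intro i hi
    rw [Finset.mem_range] at hi
    rw [WWt_congr p (i+1) rfl rfl (show m+1+(n+1)-(i+1) = (m+n-i)+1 by omega), WW_split,
      smul_add, mul_smul_comm, mul_smul_comm]
    refine congrArg₂ (· + ·) ?_ ?_
    · exact WWt_congr' p (z p) (i+1) (show m+1+(n+1)-2*(i+1) = m+n+2-2*(i+1) by omega) rfl
        (show m+n-i = m+n+1-(i+1) by omega)
    · exact WWt_congr' p (z (2*p)) i (show m+1+(n+1)-2*(i+1) = m+n-2*i by omega)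
        (show m+1-(i+1) = m-i by omega) rfl
  have l1 : RHS p (m+1) (n+1)
      = (∑ i ∈ Finset.range (m+1),
          ((m+1+(n+1)-2*(i+1)).choose (m+1-(i+1)) : ℚ) • WW p (m+1+(n+1)-(i+1)) (i+1))
        + ((m+1+(n+1)-2*0).choose (m+1-0) : ℚ) • WW p (m+1+(n+1)-0) 0 := by
    rw [RHS, show min (m+1) (n+1) + 1 = m+2 by omega]
    exact Finset.sum_range_succ' _ _
  have h0 : ((m+1+(n+1)-2*0).choose (m+1-0) : ℚ) • WW p (m+1+(n+1)-0) 0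
      = z p * (((m+n+2-2*0).choose (m+1-0) : ℚ) • WW p (m+n+1-0) 0) := by
    rw [WWt_congr p 0 (show m+1+(n+1)-2*0 = m+n+2-2*0 by omega) rfl
        (show m+1+(n+1)-0 = (m+n+1-0)+1 by omega), WW_split0, mul_smul_comm]
  have l2 : (∑ i ∈ Finset.range (m+2),
        ((m+n+2-2*i).choose (m+1-i) : ℚ) • WW p (m+n+1-i) i)
      = (∑ i ∈ Finset.range (m+1),
          ((m+n+2-2*(i+1)).choose (m+1-(i+1)) : ℚ) • WW p (m+n+1-(i+1)) (i+1))
        + ((m+n+2-2*0).choose (m+1-0) : ℚ) • WW p (m+n+1-0) 0 :=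
    Finset.sum_range_succ' _ _
  have hED : RHS p (m+1) (n+1)
      = z p * (∑ i ∈ Finset.range (m+2),
          ((m+n+2-2*i).choose (m+1-i) : ℚ) • WW p (m+n+1-i) i)
        + z (2*p) * RHS p m n := by
    rw [l1, Finset.sum_congr rfl key, Finset.sum_add_distrib, h0, l2, RHS,
      show min m n + 1 = m+1 by omega, mul_add, Finset.mul_sum, Finset.mul_sum]
    abel
  rw [hED]
  have hDab : (∑ i ∈ Finset.range (m+2),
        ((m+n+2-2*i).choose (m+1-i) : ℚ) • WW p (m+n+1-i) i)
      = RHS p m (n+1) + RHS p (m+1) n := by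
    have pascal : ∀ i ∈ Finset.range (m+1),
        ((m+n+2-2*i).choose (m+1-i) : ℚ) • WW p (m+n+1-i) i
        = ((m+(n+1)-2*i).choose (m-i) : ℚ) • WW p (m+(n+1)-i) i
          + ((m+1+n-2*i).choose (m+1-i) : ℚ) • WW p (m+1+n-i) i := by
      intro i hi
      rw [Finset.mem_range] at hi
      rw [WWt_congr p i (show m+(n+1)-2*i = m+n+1-2*i by omega) rfl
          (show m+(n+1)-i = m+n+1-i by omega),
        WWt_congr p i (show m+1+n-2*i = m+n+1-2*i by omega)
          (show m+1-i = (m-i)+1 by omega) (show m+1+n-i = m+n+1-i by omega),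
        ← add_smul, ← Nat.cast_add, ← Nat.choose_succ_succ]
      exact WWt_congr p i (by omega) (by omega) rfl
    rw [Finset.sum_range_succ, Finset.sum_congr rfl pascal, Finset.sum_add_distrib]
    rw [RHS, RHS, show min m (n+1) + 1 = m + 1 by omega]
    rcases eq_or_lt_of_le hmn with heq | hlt
    · -- m = n
      subst heq
      rw [show min (m+1) m + 1 = m + 1 by omega,
        WW_cast p (show m+m+1-(m+1) = m by omega) (m+1), WW_eq_zero p (by omega),
        smul_zero, add_zero]
    · -- m < n
      rw [show min (m+1) n + 1 = m + 2 by omega, Finset.sum_range_succ (n := m+1),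
        add_assoc]
      congr 1
      rw [show m+1-(m+1) = 0 from by omega, Nat.choose_zero_right, Nat.choose_zero_right]
      rw [WW_cast p (show m+n+1-(m+1) = m+1+n-(m+1) by omega) (m+1)]
  rw [hDab, mul_add]

lemma main_aux (p : ℕ+) : ∀ (K m n : ℕ), m + n ≤ K →
    st (List.replicate m p) (List.replicate n p) = RHS p m n := by
  intro K
  induction K with
  | zero =>
    intro m n h
    have hm : m = 0 := by omega
    have hn : n = 0 := by omega
    subst hm; subst hn
    simp [st_nil_left, RHS_zero_left]
  | succ K ih =>
    intro m n h
    match m, n with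
    | 0, n => simp [st_nil_left, RHS_zero_left]
    | m+1, 0 =>
      rw [st_comm, RHS_symm]
      simp [st_nil_left, RHS_zero_left]
    | m+1, n+1 =>
      rcases le_total m n with hmn | hnm
      · exact step p m n hmn (ih m (n+1) (by omega)) (ih (m+1) n (by omega))
          (ih m n (by omega))
      · rw [st_comm, RHS_symm]
        exact step p n m hnm (ih n (m+1) (by omega)) (ih (n+1) m (by omega))
          (ih n m (by omega))

theorem stuffle_pow_pow (p : ℕ+) (m n : ℕ) :
    st (List.replicate m p) (List.replicate n p) =
      ∑ i ∈ Finset.range (min m n + 1),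
        (Nat.choose (m + n - 2 * i) (m - i) : ℚ) •
          ∑ S ∈ Finset.powersetCard i (Finset.univ : Finset (Fin (m + n - 2 * i + i))),
            word (List.ofFn fun j => if j ∈ S then 2 * p else p) := by
  rw [main_aux p (m+n) m n le_rfl, RHS]
  refine Finset.sum_congr rfl fun i hi => ?_
  rw [Finset.mem_range] at hi
  congr 1
  exact WW_cast p (by omega) i
end

section
/- Let m, n, k_1,…,k_m, l_1,…,l_n be positive integers and 1 ≤ j ≤ m. Then z_{k_1}⋯z_{k_m} ⋆̄ z_{l_1}⋯z_{l_n} = Σ_{i=0}^{n} [ (z_{k_1}⋯z_{k_{j-1}} ⋆̄ z_{l_1}⋯z_{l_i}) z_{k_j} − (z_{k_1}⋯z_{k_{j-1}} ⋆̄ z_{l_1}⋯z_{l_{i-1}}) z_{k_j+l_i} ] (z_{k_{j+1}}⋯z_{k_m} ⋆̄ z_{l_{i+1}}⋯z_{l_n}), with the conventions that an empty word is 1 and a word with index range of length -1 is 0. -/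
open MonoidAlgebra Finset

noncomputable def stbar : List ℕ+ → List ℕ+ → H
  | [], w => word w
  | k :: w1, [] => word (k :: w1)
  | k :: w1, l :: w2 =>
      z k * stbar w1 (l :: w2) + z l * stbar (k :: w1) w2 - z (k + l) * stbar w1 w2
termination_by a b => a.length + b.length
decreasing_by all_goals (simp; try omega)

lemma word_nil : word [] = 1 := rfl
lemma word_append (x y : List ℕ+) : word (x ++ y) = word x * word y := by
  induction x with
  | nil => simp [word_nil]
  | cons p x ih => simp [word_cons, ih, mul_assoc]
lemma stbar_nil_left (w : List ℕ+) : stbar [] w = word w := by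
  cases w <;> simp [stbar]
lemma stbar_nil_right (w : List ℕ+) : stbar w [] = word w := by
  cases w <;> simp [stbar]

noncomputable def Smd (u : List ℕ+) (k : ℕ+) (v b : List ℕ+) (i : ℕ) : H :=
  (stbar u (b.take i) * z k
    - if 1 ≤ i then stbar u (b.take (i-1)) * z (k + b.getD (i-1) 1) else 0)
  * stbar v (b.drop i)

lemma Smd_zero (u : List ℕ+) (k : ℕ+) (v b : List ℕ+) :
    Smd u k v b 0 = stbar u [] * z k * stbar v b := by simp [Smd]

lemma point0 (k : ℕ+) (v : List ℕ+) (l : ℕ+) (b' : List ℕ+) (i : ℕ) :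
    Smd [] k v (l :: b') (i+1)
      = z l * Smd [] k v b' i - (if i = 0 then z (k+l) * stbar v b' else 0) := by
  cases i with
  | zero => simp [Smd, stbar_nil_left, word_cons, word_nil]; noncomm_ring
  | succ i => simp [Smd, stbar_nil_left, word_cons]; noncomm_ring

lemma point (p : ℕ+) (u' : List ℕ+) (k : ℕ+) (v : List ℕ+) (l : ℕ+) (b' : List ℕ+) (i : ℕ) :
    Smd (p :: u') k v (l :: b') (i+1)
      = z p * Smd u' k v (l :: b') (i+1) + z l * Smd (p :: u') k v b' i
        - z (p + l) * Smd u' k v b' i := by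
  cases i with
  | zero => simp [Smd, stbar, stbar_nil_right, word_cons]; noncomm_ring
  | succ i => simp [Smd, stbar, stbar_nil_right, word_cons]; noncomm_ring

lemma key (N : ℕ) : ∀ (u : List ℕ+) (k : ℕ+) (v b : List ℕ+), u.length + b.length < N →
    stbar (u ++ k :: v) b = ∑ i ∈ Finset.range (b.length + 1), Smd u k v b i := by
  induction N with
  | zero => intro u k v b h; omega
  | succ N ih =>
    intro u k v b h
    match u, b with
    | [], [] =>
      simp [Smd_zero, stbar_nil_left, stbar_nil_right, word_cons, word_nil]
    | [], l :: b' =>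
      have IH := ih [] k v b' (by simp at h ⊢; omega)
      rw [List.length_cons, Finset.sum_range_succ']
      rw [Finset.sum_congr rfl (fun i _ => point0 k v l b' i)]
      rw [Finset.sum_sub_distrib, ← Finset.mul_sum, ← IH]
      rw [Finset.sum_ite_eq' (Finset.range (b'.length + 1)) 0
        (fun _ => z (k+l) * stbar v b')]
      simp only [Finset.mem_range, Nat.succ_pos, if_true, Smd_zero,
        stbar_nil_left, word_nil, one_mul]
      rw [show stbar ([] ++ k :: v) (l :: b') = stbar (k :: v) (l :: b') from rfl]
      rw [show stbar (k :: v) (l :: b')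
            = z k * stbar v (l :: b') + z l * stbar (k :: v) b' - z (k+l) * stbar v b'
          from by simp [stbar]]
      rw [show stbar ([] ++ k :: v) b' = stbar (k :: v) b' from rfl]
      noncomm_ring
    | p :: u', [] =>
      simp [Smd_zero, stbar_nil_right, word_append, word_cons, mul_assoc]
    | p :: u', l :: b' =>
      have IH1 := ih u' k v (l :: b') (by simp at h ⊢; omega)
      have IH2 := ih (p :: u') k v b' (by simp at h ⊢; omega)
      have IH3 := ih u' k v b' (by simp at h ⊢; omega)
      rw [List.length_cons, Finset.sum_range_succ']
      rw [Finset.sum_congr rfl (fun i _ => point p u' k v l b' i)]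
      rw [Finset.sum_sub_distrib, Finset.sum_add_distrib,
        ← Finset.mul_sum, ← Finset.mul_sum, ← Finset.mul_sum, ← IH2, ← IH3]
      have e1 : ∑ i ∈ Finset.range (b'.length + 1), Smd u' k v (l :: b') (i+1)
          = stbar (u' ++ k :: v) (l :: b') - Smd u' k v (l :: b') 0 := by
        rw [IH1, List.length_cons]
        conv_rhs => rw [Finset.sum_range_succ']
        exact (add_sub_cancel_right (∑ i ∈ Finset.range (b'.length + 1), Smd u' k v (l :: b') (i+1)) (Smd u' k v (l :: b') 0)).symm
      rw [e1, Smd_zero, Smd_zero]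
      rw [show stbar ((p :: u') ++ k :: v) (l :: b')
            = z p * stbar (u' ++ k :: v) (l :: b')
              + z l * stbar ((p :: u') ++ k :: v) b'
              - z (p+l) * stbar (u' ++ k :: v) b'
          from by simp [stbar]]
      rw [show stbar (p :: u') [] = z p * stbar u' [] from by
        simp [stbar_nil_right, word_cons]]
      noncomm_ring
theorem stbar_recursive (a b : List ℕ+) (hn : 1 ≤ b.length) (j : ℕ)
    (hj1 : 1 ≤ j) (hj2 : j ≤ a.length) :
    stbar a b =
      ∑ i ∈ Finset.range (b.length + 1),
        (stbar (a.take (j - 1)) (b.take i) * z (a.getD (j - 1) 1)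
          - if 1 ≤ i then
              stbar (a.take (j - 1)) (b.take (i - 1)) * z (a.getD (j - 1) 1 + b.getD (i - 1) 1)
            else 0)
        * stbar (a.drop j) (b.drop i) := by
  have hj : j - 1 < a.length := by omega
  have ha : a = a.take (j-1) ++ a.getD (j-1) 1 :: a.drop j := by
    conv_lhs => rw [← List.take_append_drop (j-1) a]
    congr 1
    rw [List.drop_eq_getElem_cons hj]
    congr 1
    · exact (List.getD_eq_getElem a 1 hj).symm
    · congr 1; omega
  have := key (a.length + b.length + 1) (a.take (j-1)) (a.getD (j-1) 1) (a.drop j) b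
    (by simp [List.length_take])
  rw [← ha] at this
  rw [this]
  exact Finset.sum_congr rfl (fun i _ => by simp [Smd])
end

section
/- The product ⋆̄ defined recursively on the free noncommutative algebra Q⟨z_1, z_2, …⟩ is commutative and associative. -/
open MonoidAlgebra Finset

noncomputable def stuffleBar (x y : H) : H :=
  Finsupp.sum x.coeff fun w1 c1 =>
    Finsupp.sum y.coeff fun w2 c2 =>
      (c1 * c2) • stbar (FreeMonoid.toList w1) (FreeMonoid.toList w2)

lemma z_mul_word (k : ℕ+) (w : List ℕ+) : z k * word w = word (k :: w) := by
  simp only [z, word, MonoidAlgebra.single_mul_single, one_mul]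
  rfl

lemma stbar_comm_aux : ∀ n (a b : List ℕ+), a.length + b.length = n → stbar a b = stbar b a := by
  intro n
  induction n using Nat.strong_induction_on with
  | _ n IH =>
  intro a b hn
  match a, b with
  | [], b => rw [stbar, stbar_nil_right]
  | a, [] => rw [stbar, stbar_nil_right]
  | k :: a, l :: b =>
    rw [stbar, stbar]
    rw [IH _ (by subst hn; simp only [List.length_cons]; omega) a (l::b) rfl, IH _ (by subst hn; simp only [List.length_cons]; omega) (k::a) b rfl,
      IH _ (by subst hn; simp only [List.length_cons]; omega) a b rfl, add_comm l k]
    abel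

lemma stbar_comm (a b : List ℕ+) : stbar a b = stbar b a := stbar_comm_aux _ a b rfl

noncomputable def Bmap : H →ₗ[ℚ] H →ₗ[ℚ] H :=
  (Finsupp.lsum ℚ fun w1 => LinearMap.toSpanSingleton ℚ (H →ₗ[ℚ] H)
    ((Finsupp.lsum ℚ fun w2 => LinearMap.toSpanSingleton ℚ H
      (stbar (FreeMonoid.toList w1) (FreeMonoid.toList w2))) ∘ₗ
        (MonoidAlgebra.coeffLinearEquiv ℚ).toLinearMap)) ∘ₗ
    (MonoidAlgebra.coeffLinearEquiv ℚ).toLinearMap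

lemma toList_ofList (a : List ℕ+) : FreeMonoid.toList (FreeMonoid.ofList a) = a := rfl

lemma word_eq_fsingle (a : List ℕ+) : word a = MonoidAlgebra.single (FreeMonoid.ofList a) 1 := rfl

lemma Bmap_word (a b : List ℕ+) : Bmap (word a) (word b) = stbar a b := by
  rw [word_eq_fsingle, word_eq_fsingle, Bmap]
  simp only [LinearMap.comp_apply, LinearEquiv.coe_coe, MonoidAlgebra.coeffLinearEquiv_apply,
    MonoidAlgebra.coeff_single]
  erw [Finsupp.lsum_single]
  rw [LinearMap.toSpanSingleton_apply, one_smul]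
  simp only [LinearMap.comp_apply, LinearEquiv.coe_coe, MonoidAlgebra.coeffLinearEquiv_apply,
    MonoidAlgebra.coeff_single]
  erw [Finsupp.lsum_single (S := ℚ)]
  rw [LinearMap.toSpanSingleton_apply, one_smul, toList_ofList, toList_ofList]

lemma stuffleBar_eq (x y : H) : stuffleBar x y = Bmap x y := by
  rw [stuffleBar, Bmap]
  simp only [LinearMap.comp_apply, LinearEquiv.coe_coe, MonoidAlgebra.coeffLinearEquiv_apply]
  erw [Finsupp.lsum_apply]
  erw [LinearMap.finsupp_sum_apply]
  apply Finsupp.sum_congr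
  intro w1 _
  rw [LinearMap.toSpanSingleton_apply, LinearMap.smul_apply]
  simp only [LinearMap.comp_apply, LinearEquiv.coe_coe, MonoidAlgebra.coeffLinearEquiv_apply]
  erw [Finsupp.lsum_apply (S := ℚ)]
  rw [Finsupp.smul_sum]
  apply Finsupp.sum_congr
  intro w2 _
  rw [LinearMap.toSpanSingleton_apply, mul_smul]

lemma single_eq_smul_word (w : FreeMonoid ℕ+) (q : ℚ) :
    MonoidAlgebra.single w q = q • word (FreeMonoid.toList w) := by
  rw [word_eq_fsingle, MonoidAlgebra.smul_single', mul_one]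
  rfl

lemma Bmap_nil_right (x : H) : Bmap x (word []) = x := by
  induction x using MonoidAlgebra.induction_linear with
  | zero => simp
  | add x y hx hy => rw [map_add, LinearMap.add_apply, hx, hy]
  | single w q =>
    rw [single_eq_smul_word, map_smul, LinearMap.smul_apply, Bmap_word, stbar_nil_right]

lemma Bmap_nil_left (y : H) : Bmap (word []) y = y := by
  induction y using MonoidAlgebra.induction_linear with
  | zero => simp
  | add x y hx hy => rw [map_add, hx, hy]
  | single w q =>
    rw [single_eq_smul_word, map_smul, Bmap_word]
    rw [show stbar [] (FreeMonoid.toList w) = word (FreeMonoid.toList w) from by rw [stbar]]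

lemma Bmap_zmul_right (m n : ℕ+) (c : List ℕ+) (X : H) :
    Bmap (z m * X) (word (n :: c)) =
      z m * Bmap X (word (n :: c)) + z n * Bmap (z m * X) (word c)
        - z (m + n) * Bmap X (word c) := by
  induction X using MonoidAlgebra.induction_linear with
  | zero => simp
  | add x y hx hy =>
    simp only [mul_add, map_add, LinearMap.add_apply, hx, hy]
    abel
  | single w q =>
    rw [single_eq_smul_word]
    simp only [mul_smul_comm, map_smul, LinearMap.smul_apply, z_mul_word, Bmap_word,
      ← smul_add, ← smul_sub]
    rw [stbar]

lemma Bmap_zmul_left (m : ℕ+) (a : List ℕ+) (n : ℕ+) (Y : H) :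
    Bmap (word (m :: a)) (z n * Y) =
      z m * Bmap (word a) (z n * Y) + z n * Bmap (word (m :: a)) Y
        - z (m + n) * Bmap (word a) Y := by
  induction Y using MonoidAlgebra.induction_linear with
  | zero => simp
  | add x y hx hy =>
    simp only [mul_add, map_add, hx, hy]
    abel
  | single w q =>
    rw [single_eq_smul_word]
    simp only [mul_smul_comm, map_smul, LinearMap.smul_apply, z_mul_word, Bmap_word,
      ← smul_add, ← smul_sub]
    rw [stbar]

lemma Bmap_comm (x y : H) : Bmap x y = Bmap y x := by
  induction x using MonoidAlgebra.induction_linear with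
  | zero => simp
  | add x1 x2 h1 h2 => simp only [map_add, LinearMap.add_apply, h1, h2]
  | single w1 q1 =>
    induction y using MonoidAlgebra.induction_linear with
    | zero => simp
    | add y1 y2 h1 h2 => simp only [map_add, LinearMap.add_apply, h1, h2]
    | single w2 q2 =>
      rw [single_eq_smul_word, single_eq_smul_word]
      simp only [map_smul, LinearMap.smul_apply, Bmap_word]
      rw [stbar_comm, smul_comm]

lemma Bmap_stbar_cons_right (k l n0 : ℕ+) (a b c : List ℕ+) :
    Bmap (stbar (k :: a) (l :: b)) (word (n0 :: c)) =
      z k * Bmap (stbar a (l :: b)) (word (n0 :: c))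
      + z l * Bmap (stbar (k :: a) b) (word (n0 :: c))
      - z (k + l) * Bmap (stbar a b) (word (n0 :: c))
      + z n0 * Bmap (stbar (k :: a) (l :: b)) (word c)
      - z (k + n0) * Bmap (stbar a (l :: b)) (word c)
      - z (l + n0) * Bmap (stbar (k :: a) b) (word c)
      + z (k + l + n0) * Bmap (stbar a b) (word c) := by
  have hrec : Bmap (stbar (k :: a) (l :: b)) (word c) =
      Bmap (z k * stbar a (l :: b)) (word c) + Bmap (z l * stbar (k :: a) b) (word c)
        - Bmap (z (k + l) * stbar a b) (word c) := by
    rw [stbar]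
    simp only [map_add, map_sub, LinearMap.add_apply, LinearMap.sub_apply]
  rw [hrec]
  conv_lhs => rw [stbar]
  simp only [map_add, map_sub, LinearMap.add_apply, LinearMap.sub_apply,
    Bmap_zmul_right, mul_add, mul_sub]
  abel

lemma assoc_aux : ∀ n (a b c : List ℕ+), a.length + b.length + c.length = n →
    Bmap (stbar a b) (word c) = Bmap (word a) (stbar b c) := by
  intro n
  induction n using Nat.strong_induction_on with
  | _ n IH =>
  intro a b c hn
  have IH' : ∀ x y u : List ℕ+, x.length + y.length + u.length < n →
      Bmap (stbar x y) (word u) = Bmap (stbar y u) (word x) := fun x y u h =>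
    (IH _ h x y u rfl).trans (Bmap_comm _ _)
  match a, b, c with
  | [], b, c =>
    rw [show stbar [] b = word b from by rw [stbar], Bmap_word, Bmap_nil_left]
  | a, [], c =>
    rw [stbar_nil_right, Bmap_word, show stbar [] c = word c from by rw [stbar], Bmap_word]
  | a, b, [] =>
    rw [Bmap_nil_right, stbar_nil_right, Bmap_word]
  | k :: a, l :: b, n0 :: c =>
    simp only [List.length_cons] at hn
    conv_rhs => rw [Bmap_comm, Bmap_stbar_cons_right]
    conv_lhs => rw [Bmap_stbar_cons_right]
    rw [IH' a (l :: b) (n0 :: c) (by simp only [List.length_cons]; omega),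
        IH' (k :: a) b (n0 :: c) (by simp only [List.length_cons]; omega),
        IH' a b (n0 :: c) (by simp only [List.length_cons]; omega),
        IH' (k :: a) (l :: b) c (by simp only [List.length_cons]; omega),
        IH' a (l :: b) c (by simp only [List.length_cons]; omega),
        IH' (k :: a) b c (by simp only [List.length_cons]; omega),
        IH' a b c (by omega)]
    rw [show l + k = k + l from add_comm l k,
        show n0 + k = k + n0 from add_comm n0 k,
        show l + n0 + k = k + l + n0 from by rw [add_comm (l + n0) k, ← add_assoc]]
    abel

lemma Bmap_assoc (x y w : H) : Bmap (Bmap x y) w = Bmap x (Bmap y w) := by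
  induction x using MonoidAlgebra.induction_linear with
  | zero => simp
  | add x1 x2 h1 h2 => simp only [map_add, LinearMap.add_apply, h1, h2]
  | single w1 q1 =>
    induction y using MonoidAlgebra.induction_linear with
    | zero => simp
    | add y1 y2 h1 h2 => simp only [map_add, LinearMap.add_apply, h1, h2]
    | single w2 q2 =>
      induction w using MonoidAlgebra.induction_linear with
      | zero => simp
      | add w1' w2' h1 h2 => simp only [map_add, h1, h2]
      | single w3 q3 =>
        simp only [single_eq_smul_word, map_smul, LinearMap.smul_apply, Bmap_word]
        rw [assoc_aux _ _ _ _ rfl]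

theorem stuffleBar_comm_assoc :
    (∀ x y : H, stuffleBar x y = stuffleBar y x) ∧
    (∀ x y w : H, stuffleBar (stuffleBar x y) w = stuffleBar x (stuffleBar y w)) := by
  constructor
  · intro x y
    rw [stuffleBar_eq, stuffleBar_eq, Bmap_comm]
  · intro x y w
    rw [stuffleBar_eq, stuffleBar_eq, stuffleBar_eq, stuffleBar_eq, Bmap_assoc]
end

section
/- For positive integers k, l, p with k, l ≥ 2 and p ≥ 2, and nonnegative integers m, n: ζ(k, {p}^m) ζ(l, {p}^n) = Σ_{1≤i≤m, 0≤j≤min(m-i,n), k∈A_j^{m+n-i-2j}} binom(m+n-i-2j, n-j) [ζ(k, {p}^i, l, k) + ζ(k, {p}^{i-1}, p+l, k)] + Σ_{1≤i≤n, 0≤j≤min(m,n-i), k∈A_j^{m+n-i-2j}} binom(m+n-i-2j, m-j) [ζ(l, {p}^i, k, k) + ζ(l, {p}^{i-1}, p+k, k)] + Σ_{0≤j≤min(m,n), k∈A_j^{m+n-2j}} binom(m+n-2j, m-j) [ζ(k, l, k) + ζ(l, k, k) + ζ(k+l, k)]. -/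
/-- The multiple zeta value ζ(k₁,…,kₙ) = ∑_{m₁ > m₂ > ⋯ > mₙ > 0} ∏ᵢ mᵢ^{-kᵢ}. -/
noncomputable def mzv (ks : List ℕ) : ℝ :=
  ∑' m : {f : Fin ks.length → ℕ // (∀ i j : Fin ks.length, i < j → f j < f i) ∧ ∀ i, 0 < f i},
    ∏ i : Fin ks.length, (1 : ℝ) / (m.1 i : ℝ) ^ ks.get i

/-- The multiple zeta-star value ζ*(k₁,…,kₙ) = ∑_{m₁ ≥ m₂ ≥ ⋯ ≥ mₙ ≥ 1} ∏ᵢ mᵢ^{-kᵢ}. -/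
noncomputable def mzvStar (ks : List ℕ) : ℝ :=
  ∑' m : {f : Fin ks.length → ℕ // (∀ i j : Fin ks.length, i < j → f j ≤ f i) ∧ ∀ i, 1 ≤ f i},
    ∏ i : Fin ks.length, (1 : ℝ) / (m.1 i : ℝ) ^ ks.get i

/-- The string consisting of copies of `p` and `2*p`, with `2*p` at the positions in `S`. -/
def strA {N : ℕ} (p : ℕ) (S : Finset (Fin N)) : List ℕ :=
  List.ofFn fun t => if t ∈ S then 2 * p else p

set_option maxHeartbeats 1000000

open ENNReal NNReal

namespace MzvAux


noncomputable def Z : List ℕ → ℕ∞ → ℝ≥0∞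
  | [], _ => 1
  | a :: x, N => ∑' m : ℕ, if 0 < m ∧ (m : ℕ∞) < N then ((m : ℝ≥0∞) ^ a)⁻¹ * Z x m else 0

lemma Z_nil (N : ℕ∞) : Z [] N = 1 := rfl

lemma Z_cons (a : ℕ) (x : List ℕ) (N : ℕ∞) :
    Z (a :: x) N = ∑' m : ℕ, if 0 < m ∧ (m : ℕ∞) < N then ((m : ℝ≥0∞) ^ a)⁻¹ * Z x m else 0 := rfl

def stuffleL : List ℕ → List ℕ → List (List ℕ)
  | [], v => [v]
  | u :: us, [] => [u :: us]
  | a :: x, b :: y =>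
      ((stuffleL x (b :: y)).map (a :: ·)) ++ ((stuffleL (a :: x) y).map (b :: ·))
        ++ ((stuffleL x y).map ((a + b) :: ·))
  termination_by u v => u.length + v.length
  decreasing_by all_goals (simp only [List.length_cons]; omega)

lemma stuffleL_nil_left (v : List ℕ) : stuffleL [] v = [v] := by rw [stuffleL]

lemma stuffleL_nil_right (u : List ℕ) : stuffleL u [] = [u] := by cases u with | nil => rw [stuffleL] | cons a as => rw [stuffleL]

lemma stuffleL_cons_cons (a b : ℕ) (x y : List ℕ) :
    stuffleL (a :: x) (b :: y) =
      ((stuffleL x (b :: y)).map (a :: ·)) ++ ((stuffleL (a :: x) y).map (b :: ·))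
        ++ ((stuffleL x y).map ((a + b) :: ·)) := by
  rw [stuffleL]

/-- Sum of `G` over the stuffle list. -/
noncomputable def SG (G : List ℕ → ℝ≥0∞) (u v : List ℕ) : ℝ≥0∞ := ((stuffleL u v).map G).sum

lemma SG_nil_left (G : List ℕ → ℝ≥0∞) (v : List ℕ) : SG G [] v = G v := by
  simp [SG, stuffleL_nil_left]

lemma SG_nil_right (G : List ℕ → ℝ≥0∞) (u : List ℕ) : SG G u [] = G u := by
  simp [SG, stuffleL_nil_right]

lemma SG_cons_cons (G : List ℕ → ℝ≥0∞) (a b : ℕ) (x y : List ℕ) :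
    SG G (a :: x) (b :: y) =
      SG (fun w => G (a :: w)) x (b :: y) + SG (fun w => G (b :: w)) (a :: x) y
        + SG (fun w => G ((a + b) :: w)) x y := by
  simp [SG, stuffleL_cons_cons, List.map_map, Function.comp_def, add_assoc]


variable {α : Type*}

lemma list_mul_sum (c : ℝ≥0∞) (l : List α) (f : α → ℝ≥0∞) :
    c * (l.map f).sum = (l.map (fun a => c * f a)).sum := by
  induction l with
  | nil => simp
  | cons h t ih => simp [mul_add, ih]

lemma list_ite_sum (P : Prop) [Decidable P] (l : List α) (f : α → ℝ≥0∞) :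
    (if P then (l.map f).sum else 0) = (l.map (fun a => if P then f a else 0)).sum := by
  split <;> simp

lemma list_tsum_sum (l : List α) (f : α → ℕ → ℝ≥0∞) :
    ∑' m : ℕ, (l.map (fun a => f a m)).sum = (l.map (fun a => ∑' m : ℕ, f a m)).sum := by
  induction l with
  | nil => simp
  | cons h t ih => simp only [List.map_cons, List.sum_cons, ENNReal.tsum_add, ih]


theorem Z_mul (u v : List ℕ) (N : ℕ∞) : Z u N * Z v N = SG (fun w => Z w N) u v := by
  match u, v with
  | [], v => simp [Z_nil, SG_nil_left]
  | u0 :: us, [] => rw [Z_nil, SG_nil_right, mul_one]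
  | a :: x, b :: y =>
    have hIH1 : ∀ M : ℕ∞, Z x M * Z (b :: y) M = SG (fun w => Z w M) x (b :: y) :=
      fun M => Z_mul x (b :: y) M
    have hIH2 : ∀ M : ℕ∞, Z (a :: x) M * Z y M = SG (fun w => Z w M) (a :: x) y :=
      fun M => Z_mul (a :: x) y M
    have hIH3 : ∀ M : ℕ∞, Z x M * Z y M = SG (fun w => Z w M) x y :=
      fun M => Z_mul x y M
    set f : ℕ → ℝ≥0∞ := fun m => if 0 < m ∧ (m : ℕ∞) < N then ((m : ℝ≥0∞) ^ a)⁻¹ * Z x m else 0 with hf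
    set g : ℕ → ℝ≥0∞ := fun n => if 0 < n ∧ (n : ℕ∞) < N then ((n : ℝ≥0∞) ^ b)⁻¹ * Z y n else 0 with hg
    have hZa : Z (a :: x) N = ∑' m : ℕ, f m := by rw [Z_cons]
    have hZb : Z (b :: y) N = ∑' n : ℕ, g n := by rw [Z_cons]
    have hfm : ∀ m : ℕ, 0 < m ∧ (m : ℕ∞) < N → f m = ((m : ℝ≥0∞) ^ a)⁻¹ * Z x m := by
      intro m hm; simp only [hf, if_pos hm]
    have hfm0 : ∀ m : ℕ, ¬(0 < m ∧ (m : ℕ∞) < N) → f m = 0 := by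
      intro m hm; simp only [hf, if_neg hm]
    have hgn : ∀ n : ℕ, 0 < n ∧ (n : ℕ∞) < N → g n = ((n : ℝ≥0∞) ^ b)⁻¹ * Z y n := by
      intro n hn; simp only [hg, if_pos hn]
    have hgn0 : ∀ n : ℕ, ¬(0 < n ∧ (n : ℕ∞) < N) → g n = 0 := by
      intro n hn; simp only [hg, if_neg hn]
    have expand : (∑' m : ℕ, f m) * (∑' n : ℕ, g n) = ∑' m : ℕ, ∑' n : ℕ, f m * g n := by
      rw [← ENNReal.tsum_mul_right]
      exact tsum_congr fun m => (ENNReal.tsum_mul_left).symm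
    have split : ∀ m n : ℕ, f m * g n =
        (if n < m then f m * g n else 0) + (if m < n then f m * g n else 0)
          + (if m = n then f m * g n else 0) := by
      intro m n
      rcases lt_trichotomy n m with h | h | h
      · rw [if_pos h, if_neg (by omega), if_neg (by omega), add_zero, add_zero]
      · rw [if_neg (by omega), if_neg (by omega), if_pos (by omega), zero_add, zero_add]
      · rw [if_neg (by omega), if_pos h, if_neg (by omega), zero_add, add_zero]
    -- region n < m
    have key1 : (∑' m : ℕ, ∑' n : ℕ, if n < m then f m * g n else 0)
        = SG (fun w => Z (a :: w) N) x (b :: y) := by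
      have inner : ∀ m : ℕ, (∑' n : ℕ, if n < m then f m * g n else 0)
          = if 0 < m ∧ (m : ℕ∞) < N then
              ((m : ℝ≥0∞) ^ a)⁻¹ * SG (fun w => Z w (m : ℕ∞)) x (b :: y) else 0 := by
        intro m
        by_cases hm : 0 < m ∧ (m : ℕ∞) < N
        · rw [if_pos hm, ← hIH1, ← mul_assoc]
          have step : ∀ n : ℕ, (if n < m then f m * g n else 0)
              = (((m : ℝ≥0∞) ^ a)⁻¹ * Z x m) *
                  (if 0 < n ∧ (n : ℕ∞) < (m : ℕ∞) then ((n : ℝ≥0∞) ^ b)⁻¹ * Z y n else 0) := by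
            intro n
            by_cases hn : n < m
            · rw [if_pos hn, hfm m hm]
              by_cases hn0 : 0 < n
              · have h1 : 0 < n ∧ (n : ℕ∞) < N :=
                  ⟨hn0, lt_trans (by exact_mod_cast hn) hm.2⟩
                rw [hgn n h1, if_pos ⟨hn0, by exact_mod_cast hn⟩]
              · rw [hgn0 n (by omega), if_neg (by push_neg; intro h; omega)]
            · rw [if_neg hn, if_neg (by rintro ⟨h0, hc⟩; exact hn (by exact_mod_cast hc))]; simp
          rw [tsum_congr step, ENNReal.tsum_mul_left, ← Z_cons, mul_assoc]
        · rw [if_neg hm]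
          have : ∀ n : ℕ, (if n < m then f m * g n else 0) = 0 := by
            intro n; rw [hfm0 m hm]; simp
          rw [tsum_congr this, tsum_zero]
      rw [tsum_congr inner]
      calc
        (∑' m : ℕ, if 0 < m ∧ (m : ℕ∞) < N then
            ((m : ℝ≥0∞) ^ a)⁻¹ * SG (fun w => Z w (m : ℕ∞)) x (b :: y) else 0)
            = ∑' m : ℕ, ((stuffleL x (b :: y)).map
                (fun w => if 0 < m ∧ (m : ℕ∞) < N then ((m : ℝ≥0∞) ^ a)⁻¹ * Z w m else 0)).sum := by
              refine tsum_congr fun m => ?_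
              rw [SG, list_mul_sum, list_ite_sum]
        _ = ((stuffleL x (b :: y)).map
              (fun w => ∑' m : ℕ, if 0 < m ∧ (m : ℕ∞) < N then ((m : ℝ≥0∞) ^ a)⁻¹ * Z w m else 0)).sum :=
            list_tsum_sum _ _
        _ = SG (fun w => Z (a :: w) N) x (b :: y) := by
            rw [SG]
            exact congrArg List.sum (List.map_congr_left fun w _ => (Z_cons a w N).symm)
    -- helper for final tsum over m of list sums
    have tail_tsum : ∀ (c : ℕ) (l : List (List ℕ)),
        (∑' m : ℕ, if 0 < m ∧ (m : ℕ∞) < N then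
            ((m : ℝ≥0∞) ^ c)⁻¹ * ((l.map (fun w => Z w (m : ℕ∞))).sum) else 0)
          = (l.map (fun w => Z (c :: w) N)).sum := by
      intro c l
      calc
        (∑' m : ℕ, if 0 < m ∧ (m : ℕ∞) < N then
            ((m : ℝ≥0∞) ^ c)⁻¹ * ((l.map (fun w => Z w (m : ℕ∞))).sum) else 0)
            = ∑' m : ℕ, (l.map
                (fun w => if 0 < m ∧ (m : ℕ∞) < N then ((m : ℝ≥0∞) ^ c)⁻¹ * Z w m else 0)).sum := by
              refine tsum_congr fun m => ?_
              rw [list_mul_sum, list_ite_sum]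
        _ = (l.map
              (fun w => ∑' m : ℕ, if 0 < m ∧ (m : ℕ∞) < N then ((m : ℝ≥0∞) ^ c)⁻¹ * Z w m else 0)).sum :=
            list_tsum_sum _ _
        _ = (l.map (fun w => Z (c :: w) N)).sum :=
            congrArg List.sum (List.map_congr_left fun w _ => (Z_cons c w N).symm)
    -- region m < n
    have key2 : (∑' m : ℕ, ∑' n : ℕ, if m < n then f m * g n else 0)
        = SG (fun w => Z (b :: w) N) (a :: x) y := by
      rw [ENNReal.tsum_comm]
      have inner : ∀ n : ℕ, (∑' m : ℕ, if m < n then f m * g n else 0)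
          = if 0 < n ∧ (n : ℕ∞) < N then
              ((n : ℝ≥0∞) ^ b)⁻¹ * SG (fun w => Z w (n : ℕ∞)) (a :: x) y else 0 := by
        intro n
        by_cases hn : 0 < n ∧ (n : ℕ∞) < N
        · rw [if_pos hn, ← hIH2]
          have step : ∀ m : ℕ, (if m < n then f m * g n else 0)
              = (((n : ℝ≥0∞) ^ b)⁻¹ * Z y n) *
                  (if 0 < m ∧ (m : ℕ∞) < (n : ℕ∞) then ((m : ℝ≥0∞) ^ a)⁻¹ * Z x m else 0) := by
            intro m
            by_cases hm : m < n
            · rw [if_pos hm, hgn n hn]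
              by_cases hm0 : 0 < m
              · have h1 : 0 < m ∧ (m : ℕ∞) < N :=
                  ⟨hm0, lt_trans (by exact_mod_cast hm) hn.2⟩
                rw [hfm m h1, if_pos ⟨hm0, by exact_mod_cast hm⟩]
                ring
              · rw [hfm0 m (by omega), if_neg (by push_neg; intro h; omega)]; simp
            · rw [if_neg hm, if_neg (by rintro ⟨h0, hc⟩; exact hm (by exact_mod_cast hc))]; simp
          rw [tsum_congr step, ENNReal.tsum_mul_left, ← Z_cons]
          ring
        · rw [if_neg hn]
          have : ∀ m : ℕ, (if m < n then f m * g n else 0) = 0 := by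
            intro m; rw [hgn0 n hn]; simp
          rw [tsum_congr this, tsum_zero]
      rw [tsum_congr inner]
      exact tail_tsum b _
    -- diagonal
    have key3 : (∑' m : ℕ, ∑' n : ℕ, if m = n then f m * g n else 0)
        = SG (fun w => Z ((a + b) :: w) N) x y := by
      have inner : ∀ m : ℕ, (∑' n : ℕ, if m = n then f m * g n else 0)
          = if 0 < m ∧ (m : ℕ∞) < N then
              ((m : ℝ≥0∞) ^ (a + b))⁻¹ * SG (fun w => Z w (m : ℕ∞)) x y else 0 := by
        intro m
        have hsingle : (∑' n : ℕ, if m = n then f m * g n else 0) = f m * g m := by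
          rw [tsum_eq_single m (fun n hn => if_neg (fun h => hn h.symm))]
          rw [if_pos rfl]
        rw [hsingle]
        by_cases hm : 0 < m ∧ (m : ℕ∞) < N
        · rw [if_pos hm, hfm m hm, hgn m hm, ← hIH3, pow_add,
            ENNReal.mul_inv (Or.inl (pow_ne_zero a (by exact_mod_cast hm.1.ne')))
              (Or.inl (ENNReal.pow_ne_top (ENNReal.natCast_ne_top m)))]
          ring
        · rw [if_neg hm, hfm0 m hm, zero_mul]
      rw [tsum_congr inner]
      exact tail_tsum (a + b) _
    rw [hZa, hZb, expand, SG_cons_cons]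
    calc
      (∑' m : ℕ, ∑' n : ℕ, f m * g n)
          = ∑' m : ℕ, ∑' n : ℕ,
              ((if n < m then f m * g n else 0) + (if m < n then f m * g n else 0)
                + (if m = n then f m * g n else 0)) :=
            tsum_congr fun m => tsum_congr fun n => split m n
      _ = (∑' m : ℕ, ∑' n : ℕ, if n < m then f m * g n else 0)
            + (∑' m : ℕ, ∑' n : ℕ, if m < n then f m * g n else 0)
            + (∑' m : ℕ, ∑' n : ℕ, if m = n then f m * g n else 0) := by
          simp only [ENNReal.tsum_add]
      _ = SG (fun w => Z (a :: w) N) x (b :: y) + SG (fun w => Z (b :: w) N) (a :: x) y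
            + SG (fun w => Z ((a + b) :: w) N) x y := by
          rw [key1, key2, key3]
termination_by u.length + v.length
decreasing_by all_goals (simp only [List.length_cons]; omega)

lemma Z_eq_tsum (ks : List ℕ) (N : ℕ∞) :
    Z ks N = ∑' f : Fin ks.length → ℕ,
      if (∀ i j : Fin ks.length, i < j → f j < f i) ∧ (∀ i, 0 < f i) ∧ (∀ i, (f i : ℕ∞) < N)
        then ∏ i, ((f i : ℝ≥0∞) ^ ks.get i)⁻¹ else 0 := by
  induction ks generalizing N with
  | nil =>
    rw [Z_nil, tsum_eq_single (fun i => i.elim0)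
      (fun b hb => absurd (funext fun i => i.elim0) hb)]
    rw [if_pos ⟨fun i => i.elim0, fun i => i.elim0, fun i => i.elim0⟩]
    simp
  | cons a x ih =>
    simp only [List.length_cons]
    set F : (Fin (x.length + 1) → ℕ) → ℝ≥0∞ := fun f =>
      if (∀ i j : Fin (x.length + 1), i < j → f j < f i) ∧ (∀ i, 0 < f i)
          ∧ (∀ i, (f i : ℕ∞) < N)
        then ∏ i, ((f i : ℝ≥0∞) ^ (a :: x).get i)⁻¹ else 0 with hF
    have hcond : ∀ (m : ℕ) (g : Fin x.length → ℕ),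
        ((∀ i j : Fin (x.length + 1), i < j → (Fin.cons m g : Fin (x.length + 1) → ℕ) j
              < (Fin.cons m g : Fin (x.length + 1) → ℕ) i)
            ∧ (∀ i, 0 < (Fin.cons m g : Fin (x.length + 1) → ℕ) i)
            ∧ (∀ i, (((Fin.cons m g : Fin (x.length + 1) → ℕ) i : ℕ) : ℕ∞) < N))
          ↔ ((0 < m ∧ (m : ℕ∞) < N)
            ∧ ((∀ i j : Fin x.length, i < j → g j < g i) ∧ (∀ i, 0 < g i)
                ∧ (∀ i, (g i : ℕ∞) < (m : ℕ∞)))) := by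
      intro m g
      constructor
      · rintro ⟨hdec, hpos, hbdd⟩
        refine ⟨⟨by simpa using hpos 0, by simpa using hbdd 0⟩, ?_, ?_, ?_⟩
        · intro i j hij
          have := hdec i.succ j.succ (by simpa using hij)
          simpa using this
        · intro i; simpa using hpos i.succ
        · intro i
          have := hdec 0 i.succ (Fin.succ_pos i)
          simp only [Fin.cons_zero, Fin.cons_succ] at this
          exact_mod_cast this
      · rintro ⟨⟨hm0, hmN⟩, hdec, hpos, hlt⟩
        refine ⟨?_, ?_, ?_⟩
        · intro i j hij
          induction j using Fin.cases with
          | zero => exact absurd hij (Fin.not_lt_zero _)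
          | succ j' =>
            induction i using Fin.cases with
            | zero =>
              simp only [Fin.cons_zero, Fin.cons_succ]
              exact_mod_cast hlt j'
            | succ i' =>
              simp only [Fin.cons_succ]
              exact hdec i' j' (by simpa using hij)
        · intro i
          induction i using Fin.cases with
          | zero => simpa using hm0
          | succ i' => simpa using hpos i'
        · intro i
          induction i using Fin.cases with
          | zero => simpa using hmN
          | succ i' =>
            simp only [Fin.cons_succ]
            exact lt_trans (by exact_mod_cast hlt i') hmN
    have hprod : ∀ (m : ℕ) (g : Fin x.length → ℕ),
        (∏ i : Fin (x.length + 1), (((Fin.cons m g : Fin (x.length + 1) → ℕ) i : ℝ≥0∞) ^ (a :: x).get i)⁻¹)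
          = ((m : ℝ≥0∞) ^ a)⁻¹ * ∏ i : Fin x.length, ((g i : ℝ≥0∞) ^ x.get i)⁻¹ := by
      intro m g
      rw [Fin.prod_univ_succ]
      simp [Fin.cons_succ]
    have inner : ∀ m : ℕ,
        (if 0 < m ∧ (m : ℕ∞) < N then ((m : ℝ≥0∞) ^ a)⁻¹ * Z x (m : ℕ∞) else 0)
          = ∑' g : Fin x.length → ℕ, F (Fin.cons m g) := by
      intro m
      have hFg : ∀ g : Fin x.length → ℕ, F (Fin.cons m g)
          = if (0 < m ∧ (m : ℕ∞) < N) ∧ ((∀ i j : Fin x.length, i < j → g j < g i)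
                ∧ (∀ i, 0 < g i) ∧ (∀ i, (g i : ℕ∞) < (m : ℕ∞)))
              then ((m : ℝ≥0∞) ^ a)⁻¹ * ∏ i, ((g i : ℝ≥0∞) ^ x.get i)⁻¹ else 0 := by
        intro g
        rw [hF]
        simp only
        rw [if_congr (hcond m g) (hprod m g) rfl]
      rw [tsum_congr hFg]
      by_cases hm : 0 < m ∧ (m : ℕ∞) < N
      · rw [if_pos hm, ih, ← ENNReal.tsum_mul_left]
        refine tsum_congr fun g => ?_
        by_cases hg : (∀ i j : Fin x.length, i < j → g j < g i)
            ∧ (∀ i, 0 < g i) ∧ (∀ i, (g i : ℕ∞) < (m : ℕ∞))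
        · rw [if_pos hg, if_pos ⟨hm, hg⟩]
        · rw [if_neg hg, if_neg (by tauto), mul_zero]
      · rw [if_neg hm]
        symm
        calc _ = ∑' _g : Fin x.length → ℕ, (0:ℝ≥0∞) :=
              tsum_congr fun g => if_neg (by tauto)
          _ = 0 := tsum_zero
    calc
      Z (a :: x) N
          = ∑' m : ℕ, if 0 < m ∧ (m : ℕ∞) < N then ((m : ℝ≥0∞) ^ a)⁻¹ * Z x (m : ℕ∞) else 0 :=
            Z_cons a x N
      _ = ∑' m : ℕ, ∑' g : Fin x.length → ℕ, F (Fin.cons m g) := tsum_congr inner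
      _ = ∑' p : ℕ × (Fin x.length → ℕ),
            F ((Fin.consEquiv (fun _ : Fin (x.length + 1) => ℕ)) p) :=
            (ENNReal.tsum_prod (f := fun m g => F (Fin.cons m g))).symm
      _ = ∑' f : Fin (x.length + 1) → ℕ, F f :=
            Equiv.tsum_eq (Fin.consEquiv (fun _ : Fin (x.length + 1) => ℕ)) F

lemma Z_eq_mzvE (ks : List ℕ) :
    Z ks ⊤ = ∑' m : {f : Fin ks.length → ℕ //
        (∀ i j : Fin ks.length, i < j → f j < f i) ∧ ∀ i, 0 < f i},
      ∏ i : Fin ks.length, ((m.1 i : ℝ≥0∞) ^ ks.get i)⁻¹ := by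
  rw [Z_eq_tsum]
  have step : (∑' f : Fin ks.length → ℕ,
      if (∀ i j : Fin ks.length, i < j → f j < f i) ∧ (∀ i, 0 < f i)
          ∧ (∀ i, (f i : ℕ∞) < ⊤)
        then ∏ i, ((f i : ℝ≥0∞) ^ ks.get i)⁻¹ else 0)
      = ∑' f : Fin ks.length → ℕ,
        Set.indicator {f : Fin ks.length → ℕ |
            (∀ i j : Fin ks.length, i < j → f j < f i) ∧ ∀ i, 0 < f i}
          (fun f => ∏ i : Fin ks.length, ((f i : ℝ≥0∞) ^ ks.get i)⁻¹) f := by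
    refine tsum_congr fun f => ?_
    by_cases hP : (∀ i j : Fin ks.length, i < j → f j < f i) ∧ ∀ i, 0 < f i
    · have hmem : f ∈ {f : Fin ks.length → ℕ |
          (∀ i j : Fin ks.length, i < j → f j < f i) ∧ ∀ i, 0 < f i} := hP
      rw [Set.indicator_of_mem hmem, if_pos ⟨hP.1, hP.2, fun i => by exact_mod_cast WithTop.coe_lt_top (f i)⟩]
    · have hmem : f ∉ {f : Fin ks.length → ℕ |
          (∀ i j : Fin ks.length, i < j → f j < f i) ∧ ∀ i, 0 < f i} := hP
      rw [Set.indicator_of_notMem hmem, if_neg (fun h => hP ⟨h.1, h.2.1⟩)]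
  rw [step]
  exact (tsum_subtype _ _).symm

lemma term_ne_top (ks : List ℕ) (f : Fin ks.length → ℕ) (hf : ∀ i, 0 < f i) :
    (∏ i : Fin ks.length, ((f i : ℝ≥0∞) ^ ks.get i)⁻¹) ≠ ⊤ := by
  refine (prod_lt_top fun i _ => ?_).ne
  rw [ENNReal.inv_lt_top]
  refine pos_iff_ne_zero.2 (pow_ne_zero _ ?_)
  exact_mod_cast (hf i).ne'

lemma mzv_eq (ks : List ℕ) : mzv ks = (Z ks ⊤).toReal := by
  have h := ENNReal.tsum_toReal_eq
    (f := fun m : {f : Fin ks.length → ℕ //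
        (∀ i j : Fin ks.length, i < j → f j < f i) ∧ ∀ i, 0 < f i} =>
      ∏ i : Fin ks.length, ((m.1 i : ℝ≥0∞) ^ ks.get i)⁻¹)
    (fun m => term_ne_top ks m.1 m.2.2)
  rw [Z_eq_mzvE, h, mzv]
  refine tsum_congr fun m => ?_
  rw [ENNReal.toReal_prod]
  refine Finset.prod_congr rfl fun i _ => ?_
  rw [ENNReal.toReal_inv, one_div, ENNReal.toReal_pow, ENNReal.toReal_natCast]

lemma C2_ne_top : (∑' m : ℕ, if 0 < m then ((m : ℝ≥0∞) ^ 2)⁻¹ else 0) ≠ ⊤ := by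
  have hcoe : ∀ m : ℕ, (if 0 < m then ((m : ℝ≥0∞) ^ 2)⁻¹ else 0)
      = (((if 0 < m then ((m : ℝ≥0) ^ 2)⁻¹ else 0) : ℝ≥0) : ℝ≥0∞) := by
    intro m
    split
    · rename_i h
      rw [ENNReal.coe_inv (pow_ne_zero _ (by exact_mod_cast h.ne')), ENNReal.coe_pow]
      norm_cast
    · simp
  rw [tsum_congr hcoe]
  rw [ENNReal.tsum_coe_ne_top_iff_summable]
  rw [← NNReal.summable_coe]
  have : Summable fun m : ℕ => 1 / (m : ℝ) ^ 2 := Real.summable_one_div_nat_pow.2 one_lt_two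
  refine this.congr fun m => ?_
  by_cases hm : 0 < m
  · rw [if_pos hm]
    push_cast [hm]
    rw [one_div]
  · rw [if_neg hm]
    have : m = 0 := by omega
    simp [this]

lemma Z_le_pow (ks : List ℕ) (hks : ∀ c ∈ ks, 2 ≤ c) (N : ℕ∞) :
    Z ks N ≤ (∑' m : ℕ, if 0 < m then ((m : ℝ≥0∞) ^ 2)⁻¹ else 0) ^ ks.length := by
  induction ks generalizing N with
  | nil => simp [Z_nil]
  | cons a x ih =>
    rw [Z_cons, List.length_cons, pow_succ', ← ENNReal.tsum_mul_right]
    refine ENNReal.tsum_le_tsum fun m => ?_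
    by_cases hm : 0 < m ∧ (m : ℕ∞) < N
    · rw [if_pos hm, if_pos hm.1]
      refine mul_le_mul' ?_ (ih (fun c hc => hks c (List.mem_cons_of_mem a hc)) m)
      refine ENNReal.inv_le_inv' ?_
      refine pow_le_pow_right₀ ?_ (hks a List.mem_cons_self)
      exact_mod_cast hm.1
    · rw [if_neg hm]
      exact zero_le

lemma Z_ne_top (ks : List ℕ) (hks : ∀ c ∈ ks, 2 ≤ c) (N : ℕ∞) : Z ks N ≠ ⊤ :=
  ne_top_of_le_ne_top (pow_ne_top C2_ne_top) (Z_le_pow ks hks N)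

lemma zero_not_mem_map_succ (L : ℕ) (S : Finset (Fin L)) :
    (0 : Fin (L + 1)) ∉ S.map (Fin.succEmb L) := by
  simp only [Finset.mem_map]
  rintro ⟨i, _, hi⟩
  exact Fin.succ_ne_zero i hi

lemma strA_map_succ (L : ℕ) (q : ℕ) (S : Finset (Fin L)) :
    strA q (S.map (Fin.succEmb L)) = q :: strA q S := by
  rw [strA, strA, List.ofFn_succ]
  congr 1
  · rw [if_neg]
    simp only [Finset.mem_map]
    rintro ⟨i, _, hi⟩
    exact Fin.succ_ne_zero i hi
  · refine congrArg _ (funext fun i => ?_)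
    by_cases h : i ∈ S
    · rw [if_pos h, if_pos (show (i.succ : Fin (L + 1)) ∈ S.map (Fin.succEmb L) from
        Finset.mem_map_of_mem _ h)]
    · rw [if_neg h, if_neg]
      simp only [Finset.mem_map]
      rintro ⟨x, hx, hxi⟩
      have : x = i := Fin.succ_injective _ hxi
      exact h (this ▸ hx)

lemma strA_insert_zero (L : ℕ) (q : ℕ) (S : Finset (Fin L)) :
    strA q (insert (0 : Fin (L + 1)) (S.map (Fin.succEmb L))) = 2 * q :: strA q S := by
  rw [strA, strA, List.ofFn_succ]
  congr 1
  · rw [if_pos (Finset.mem_insert_self _ _)]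
  · refine congrArg _ (funext fun i => ?_)
    by_cases h : i ∈ S
    · rw [if_pos h, if_pos (show (i.succ : Fin (L + 1)) ∈ insert 0 (S.map (Fin.succEmb L)) from
        Finset.mem_insert_of_mem (Finset.mem_map_of_mem _ h))]
    · rw [if_neg h, if_neg]
      simp only [Finset.mem_insert, Finset.mem_map]
      rintro (h0 | ⟨x, hx, hxi⟩)
      · exact Fin.succ_ne_zero i h0
      · have : x = i := Fin.succ_injective _ hxi
        exact h (this ▸ hx)

lemma preimage_succ_map (L : ℕ) (S : Finset (Fin (L + 1))) (h0 : (0 : Fin (L + 1)) ∉ S) :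
    (S.preimage Fin.succ (Fin.succ_injective L).injOn).map (Fin.succEmb L) = S := by
  ext t
  simp only [Finset.mem_map, Finset.mem_preimage]
  constructor
  · rintro ⟨x, hx, rfl⟩
    exact hx
  · intro ht
    induction t using Fin.cases with
    | zero => exact absurd ht h0
    | succ i => exact ⟨i, ht, rfl⟩

lemma card_preimage_succ (L : ℕ) (S : Finset (Fin (L + 1))) (h0 : (0 : Fin (L + 1)) ∉ S) :
    (S.preimage Fin.succ (Fin.succ_injective L).injOn).card = S.card := by
  conv_rhs => rw [← preimage_succ_map L S h0]
  rw [Finset.card_map]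

/-- Splitting a powersetCard sum over `Fin (L+1)` by membership of `0`. -/
lemma SA_split (q : ℕ) (L j : ℕ) (H : List ℕ → ℝ≥0∞) :
    ∑ S ∈ Finset.powersetCard (j + 1) (Finset.univ : Finset (Fin (L + 1))), H (strA q S)
      = (∑ S ∈ Finset.powersetCard (j + 1) (Finset.univ : Finset (Fin L)), H (q :: strA q S))
        + ∑ S ∈ Finset.powersetCard j (Finset.univ : Finset (Fin L)), H (2 * q :: strA q S) := by
  rw [← Finset.sum_filter_add_sum_filter_not
    (Finset.powersetCard (j + 1) (Finset.univ : Finset (Fin (L + 1))))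
    (fun S => (0 : Fin (L + 1)) ∉ S) (fun S => H (strA q S))]
  congr 1
  · refine Finset.sum_nbij' (i := fun S => S.preimage Fin.succ (Fin.succ_injective L).injOn)
      (j := fun S => S.map (Fin.succEmb L)) ?_ ?_ ?_ ?_ ?_
    · intro S hS
      rw [Finset.mem_filter, Finset.mem_powersetCard_univ] at hS
      rw [Finset.mem_powersetCard_univ, card_preimage_succ L S hS.2, hS.1]
    · intro S hS
      rw [Finset.mem_powersetCard_univ] at hS
      rw [Finset.mem_filter, Finset.mem_powersetCard_univ, Finset.card_map]
      refine ⟨hS, ?_⟩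
      simp only [Finset.mem_map]
      rintro ⟨i, _, hi⟩
      exact Fin.succ_ne_zero i hi
    · intro S hS
      rw [Finset.mem_filter] at hS
      exact preimage_succ_map L S hS.2
    · intro S _
      apply Finset.map_injective (Fin.succEmb L)
      exact preimage_succ_map L _ (zero_not_mem_map_succ L S)
    · intro S hS
      rw [Finset.mem_filter] at hS
      conv_lhs => rw [← preimage_succ_map L S hS.2, strA_map_succ]
  · refine Finset.sum_nbij' (i := fun S => (S.erase 0).preimage Fin.succ (Fin.succ_injective L).injOn)
      (j := fun S => insert (0 : Fin (L + 1)) (S.map (Fin.succEmb L))) ?_ ?_ ?_ ?_ ?_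
    · intro S hS
      simp only [Finset.mem_filter, Finset.mem_powersetCard_univ, not_not] at hS
      rw [Finset.mem_powersetCard_univ,
        card_preimage_succ L _ (Finset.notMem_erase _ _), Finset.card_erase_of_mem hS.2, hS.1]
      omega
    · intro S hS
      rw [Finset.mem_powersetCard_univ] at hS
      simp only [Finset.mem_filter, Finset.mem_powersetCard_univ, not_not]
      constructor
      · rw [Finset.card_insert_of_notMem, Finset.card_map, hS]
        simp only [Finset.mem_map]
        rintro ⟨i, _, hi⟩
        exact Fin.succ_ne_zero i hi
      · exact Finset.mem_insert_self _ _
    · intro S hS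
      simp only [Finset.mem_filter, Finset.mem_powersetCard_univ, not_not] at hS
      rw [preimage_succ_map L _ (Finset.notMem_erase _ _), Finset.insert_erase hS.2]
    · intro S _
      rw [Finset.erase_insert (zero_not_mem_map_succ L S)]
      apply Finset.map_injective (Fin.succEmb L)
      exact preimage_succ_map L _ (zero_not_mem_map_succ L S)
    · intro S hS
      simp only [Finset.mem_filter, Finset.mem_powersetCard_univ, not_not] at hS
      conv_lhs => rw [← Finset.insert_erase hS.2,
        ← preimage_succ_map L (S.erase 0) (Finset.notMem_erase _ _), strA_insert_zero]

lemma strA_empty (L q : ℕ) : strA q (∅ : Finset (Fin L)) = List.replicate L q := by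
  rw [strA]
  simp [List.ofFn_const]

lemma pascal_aux (a b j : ℕ) (hj : j ≤ min (a + 1) (b + 1)) (hne : ¬(j = a + 1 ∧ j = b + 1)) :
    ((a + 1) + (b + 1) - 2 * j).choose ((b + 1) - j)
      = (if j ≤ min a (b + 1) then (a + b + 1 - 2 * j).choose (b + 1 - j) else 0)
        + (if j ≤ min (a + 1) b then (a + b + 1 - 2 * j).choose (b - j) else 0) := by
  by_cases ha : j ≤ a
  · by_cases hb : j ≤ b
    · rw [if_pos (by omega), if_pos (by omega)]
      have h2 : (a + 1) + (b + 1) - 2 * j = (a + b + 1 - 2 * j) + 1 := by omega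
      have h3 : (b + 1) - j = (b - j) + 1 := by omega
      rw [h2, h3, Nat.choose_succ_succ]
      exact add_comm _ _
    · have hjb : j = b + 1 := by omega
      rw [if_pos (by omega), if_neg (by omega), hjb]
      have e1 : (b + 1) - (b + 1) = 0 := by omega
      rw [e1, Nat.choose_zero_right, Nat.choose_zero_right]
  · have hja : j = a + 1 := by omega
    have hjb : j ≤ b := by
      have : j ≠ b + 1 := fun h => hne ⟨hja, h⟩
      omega
    rw [if_neg (by omega), if_pos (by omega), hja]
    have e1 : (a + 1) + (b + 1) - 2 * (a + 1) = b - a := by omega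
    have e2 : (b + 1) - (a + 1) = b - a := by omega
    have e3 : a + b + 1 - 2 * (a + 1) = b - (a + 1) := by omega
    rw [e1, e2, e3, Nat.choose_self, Nat.choose_self]

lemma sumC (q : ℕ) (a b : ℕ) (G : List ℕ → ℝ≥0∞) :
    SG G (List.replicate a q) (List.replicate b q)
      = ∑ j ∈ Finset.range (min a b + 1),
          ((a + b - 2 * j).choose (b - j) : ℝ≥0∞) *
            ∑ S ∈ Finset.powersetCard j (Finset.univ : Finset (Fin (a + b - 2 * j + j))),
              G (strA q S) := by
  induction a generalizing b G with
  | zero =>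
    rw [List.replicate_zero, SG_nil_left]
    rw [Nat.zero_min, Finset.sum_range_one]
    rw [show 0 + b - 2 * 0 + 0 = b from by omega, show 0 + b - 2 * 0 = b from by omega,
      show b - 0 = b from by omega, Nat.choose_self]
    rw [Finset.powersetCard_zero, Finset.sum_singleton, strA_empty]
    simp
  | succ a iha =>
    induction b generalizing G with
    | zero =>
      rw [List.replicate_zero, SG_nil_right]
      rw [Nat.min_zero, Finset.sum_range_one]
      rw [show a + 1 + 0 - 2 * 0 + 0 = a + 1 from by omega,
        show a + 1 + 0 - 2 * 0 = a + 1 from by omega, show 0 - 0 = 0 from by omega,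
        Nat.choose_zero_right]
      rw [Finset.powersetCard_zero, Finset.sum_singleton, strA_empty]
      simp
    | succ b ihb =>
      rw [show List.replicate (a + 1) q = q :: List.replicate a q from rfl,
        show List.replicate (b + 1) q = q :: List.replicate b q from rfl, SG_cons_cons,
        show q :: List.replicate a q = List.replicate (a + 1) q from rfl,
        show q :: List.replicate b q = List.replicate (b + 1) q from rfl]
      -- three stuffle pieces via induction hypotheses
      have hterm1 : SG (fun w => G (q :: w)) (List.replicate a q) (List.replicate (b + 1) q)
          = ∑ j ∈ Finset.range (min a (b + 1) + 1),
              ((a + b + 1 - 2 * j).choose (b + 1 - j) : ℝ≥0∞) *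
                ∑ S ∈ Finset.powersetCard j
                    (Finset.univ : Finset (Fin (a + b + 1 - j))), G (q :: strA q S) := by
        rw [iha (b + 1) (fun w => G (q :: w))]
        refine Finset.sum_congr rfl fun j hj => ?_
        rw [Finset.mem_range] at hj
        rw [show a + (b + 1) - 2 * j = a + b + 1 - 2 * j from by omega,
          show (b + 1) - j = b + 1 - j from rfl,
          show a + b + 1 - 2 * j + j = a + b + 1 - j from by omega]
      have hterm2 : SG (fun w => G (q :: w)) (List.replicate (a + 1) q) (List.replicate b q)
          = ∑ j ∈ Finset.range (min (a + 1) b + 1),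
              ((a + b + 1 - 2 * j).choose (b - j) : ℝ≥0∞) *
                ∑ S ∈ Finset.powersetCard j
                    (Finset.univ : Finset (Fin (a + b + 1 - j))), G (q :: strA q S) := by
        rw [ihb (fun w => G (q :: w))]
        refine Finset.sum_congr rfl fun j hj => ?_
        rw [Finset.mem_range] at hj
        rw [show a + 1 + b - 2 * j = a + b + 1 - 2 * j from by omega,
          show a + b + 1 - 2 * j + j = a + b + 1 - j from by omega]
      have hterm3 : SG (fun w => G ((q + q) :: w)) (List.replicate a q) (List.replicate b q)
          = ∑ j ∈ Finset.range (min a b + 1),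
              ((a + b - 2 * j).choose (b - j) : ℝ≥0∞) *
                ∑ S ∈ Finset.powersetCard j
                    (Finset.univ : Finset (Fin (a + b - j))), G (2 * q :: strA q S) := by
        rw [iha b (fun w => G ((q + q) :: w))]
        refine Finset.sum_congr rfl fun j hj => ?_
        rw [Finset.mem_range] at hj
        rw [show a + b - 2 * j + j = a + b - j from by omega, show q + q = 2 * q from by ring]
      rw [hterm1, hterm2, hterm3]
      -- now work on the target sum
      have htarget : (∑ j ∈ Finset.range (min (a + 1) (b + 1) + 1),
            ((a + 1 + (b + 1) - 2 * j).choose (b + 1 - j) : ℝ≥0∞) *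
              ∑ S ∈ Finset.powersetCard j
                  (Finset.univ : Finset (Fin (a + 1 + (b + 1) - 2 * j + j))), G (strA q S))
          = (∑ j ∈ Finset.range (min (a + 1) (b + 1) + 1),
              ((a + 1 + (b + 1) - 2 * j).choose (b + 1 - j) : ℝ≥0∞) *
                ∑ S ∈ Finset.powersetCard j
                    (Finset.univ : Finset (Fin (a + b + 1 - j))), G (q :: strA q S))
            + ∑ j ∈ Finset.range (min a b + 1),
                ((a + b - 2 * j).choose (b - j) : ℝ≥0∞) *
                  ∑ S ∈ Finset.powersetCard j
                      (Finset.univ : Finset (Fin (a + b - j))), G (2 * q :: strA q S) := by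
        rw [Finset.sum_range_succ']
        have hzero : (((a + 1 + (b + 1) - 2 * 0).choose (b + 1 - 0) : ℕ) : ℝ≥0∞) *
              (∑ S ∈ Finset.powersetCard 0
                (Finset.univ : Finset (Fin (a + 1 + (b + 1) - 2 * 0 + 0))), G (strA q S))
            = (((a + 1 + (b + 1) - 2 * 0).choose (b + 1 - 0) : ℕ) : ℝ≥0∞) *
              ∑ S ∈ Finset.powersetCard 0
                (Finset.univ : Finset (Fin (a + b + 1 - 0))), G (q :: strA q S) := by
          congr 1
          rw [show a + 1 + (b + 1) - 2 * 0 + 0 = a + b + 2 from by omega,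
            show a + b + 1 - 0 = a + b + 1 from by omega,
            Finset.powersetCard_zero, Finset.powersetCard_zero,
            Finset.sum_singleton, Finset.sum_singleton, strA_empty, strA_empty,
            show List.replicate (a + b + 2) q = q :: List.replicate (a + b + 1) q from rfl]
        have hstep : ∀ j ∈ Finset.range (min (a + 1) (b + 1)),
            (((a + 1 + (b + 1) - 2 * (j + 1)).choose (b + 1 - (j + 1)) : ℕ) : ℝ≥0∞) *
              (∑ S ∈ Finset.powersetCard (j + 1)
                (Finset.univ : Finset (Fin (a + 1 + (b + 1) - 2 * (j + 1) + (j + 1)))),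
                  G (strA q S))
            = ((((a + 1 + (b + 1) - 2 * (j + 1)).choose (b + 1 - (j + 1)) : ℕ) : ℝ≥0∞) *
                ∑ S ∈ Finset.powersetCard (j + 1)
                  (Finset.univ : Finset (Fin (a + b + 1 - (j + 1)))), G (q :: strA q S))
              + (((a + 1 + (b + 1) - 2 * (j + 1)).choose (b + 1 - (j + 1)) : ℕ) : ℝ≥0∞) *
                ∑ S ∈ Finset.powersetCard j
                  (Finset.univ : Finset (Fin (a + b - j))), G (2 * q :: strA q S) := by
          intro j hj
          rw [Finset.mem_range] at hj
          rw [show a + 1 + (b + 1) - 2 * (j + 1) + (j + 1) = (a + b + 1 - (j + 1)) + 1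
              from by omega, SA_split, mul_add]
          congr 2
          rw [show a + b + 1 - (j + 1) = a + b - j from by omega]
        rw [Finset.sum_congr rfl hstep, Finset.sum_add_distrib, hzero, add_right_comm]
        congr 1
        · exact (Finset.sum_range_succ' (fun j =>
            (((a + 1 + (b + 1) - 2 * j).choose (b + 1 - j) : ℕ) : ℝ≥0∞) *
              ∑ S ∈ Finset.powersetCard j
                (Finset.univ : Finset (Fin (a + b + 1 - j))), G (q :: strA q S))
            (min (a + 1) (b + 1))).symm
        · rw [show min (a + 1) (b + 1) = min a b + 1 from by omega]
          refine Finset.sum_congr rfl fun j hj => ?_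
          rw [Finset.mem_range] at hj
          rw [show a + 1 + (b + 1) - 2 * (j + 1) = a + b - 2 * j from by omega,
            show b + 1 - (j + 1) = b - j from by omega]
      rw [htarget]
      congr 1
      -- the X-part: Pascal recombination
      have hX1 : (∑ j ∈ Finset.range (min a (b + 1) + 1),
            ((a + b + 1 - 2 * j).choose (b + 1 - j) : ℝ≥0∞) *
              ∑ S ∈ Finset.powersetCard j
                  (Finset.univ : Finset (Fin (a + b + 1 - j))), G (q :: strA q S))
          = ∑ j ∈ Finset.range (min (a + 1) (b + 1) + 1),
              ((if j ≤ min a (b + 1) then (a + b + 1 - 2 * j).choose (b + 1 - j) else 0 : ℕ) : ℝ≥0∞) *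
                ∑ S ∈ Finset.powersetCard j
                    (Finset.univ : Finset (Fin (a + b + 1 - j))), G (q :: strA q S) := by
        refine Eq.trans (Finset.sum_congr rfl fun j hj => ?_)
          (Finset.sum_subset (Finset.range_subset_range.2 (by omega)) fun j hj hnj => ?_)
        · rw [Finset.mem_range] at hj
          rw [if_pos (by omega)]
        · rw [Finset.mem_range] at hj
          rw [Finset.mem_range, not_lt] at hnj
          rw [if_neg (by omega), Nat.cast_zero, zero_mul]
      have hX2 : (∑ j ∈ Finset.range (min (a + 1) b + 1),
            ((a + b + 1 - 2 * j).choose (b - j) : ℝ≥0∞) *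
              ∑ S ∈ Finset.powersetCard j
                  (Finset.univ : Finset (Fin (a + b + 1 - j))), G (q :: strA q S))
          = ∑ j ∈ Finset.range (min (a + 1) (b + 1) + 1),
              ((if j ≤ min (a + 1) b then (a + b + 1 - 2 * j).choose (b - j) else 0 : ℕ) : ℝ≥0∞) *
                ∑ S ∈ Finset.powersetCard j
                    (Finset.univ : Finset (Fin (a + b + 1 - j))), G (q :: strA q S) := by
        refine Eq.trans (Finset.sum_congr rfl fun j hj => ?_)
          (Finset.sum_subset (Finset.range_subset_range.2 (by omega)) fun j hj hnj => ?_)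
        · rw [Finset.mem_range] at hj
          rw [if_pos (by omega)]
        · rw [Finset.mem_range] at hj
          rw [Finset.mem_range, not_lt] at hnj
          rw [if_neg (by omega), Nat.cast_zero, zero_mul]
      rw [hX1, hX2, ← Finset.sum_add_distrib]
      refine Finset.sum_congr rfl fun j hj => ?_
      rw [Finset.mem_range] at hj
      by_cases hne : j = a + 1 ∧ j = b + 1
      · -- degenerate: the S-sum is empty
        have hempty : Finset.powersetCard j
            (Finset.univ : Finset (Fin (a + b + 1 - j))) = ∅ := by
          rw [Finset.powersetCard_eq_empty]
          rw [Finset.card_univ, Fintype.card_fin]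
          omega
        rw [hempty]
        simp
      · rw [← add_mul]
        congr 1
        rw [← Nat.cast_add]
        congr 1
        exact (pascal_aux a b j (by omega) hne).symm

theorem SG_comm (G : List ℕ → ℝ≥0∞) (u v : List ℕ) : SG G u v = SG G v u := by
  match u, v with
  | [], v => rw [SG_nil_left, SG_nil_right]
  | u0 :: us, [] => rw [SG_nil_left, SG_nil_right]
  | a :: x, b :: y =>
    rw [SG_cons_cons, SG_cons_cons]
    rw [SG_comm (fun w => G (a :: w)) x (b :: y), SG_comm (fun w => G (b :: w)) (a :: x) y,
      SG_comm (fun w => G ((a + b) :: w)) x y, show a + b = b + a from by omega]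
    abel
termination_by u.length + v.length
decreasing_by all_goals (simp only [List.length_cons]; omega)

lemma sumB (q : ℕ) (c : ℕ) (v : List ℕ) (m : ℕ) (G : List ℕ → ℝ≥0∞) :
    SG G (List.replicate m q) (c :: v)
      = (∑ i ∈ Finset.range (m + 1),
          SG (fun w => G (List.replicate i q ++ c :: w)) (List.replicate (m - i) q) v)
        + ∑ i ∈ Finset.range m,
            SG (fun w => G (List.replicate i q ++ (q + c) :: w)) (List.replicate (m - 1 - i) q) v := by
  induction m generalizing G with
  | zero => simp [SG_nil_left]
  | succ m ih =>
    rw [show List.replicate (m + 1) q = q :: List.replicate m q from rfl, SG_cons_cons,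
      show q :: List.replicate m q = List.replicate (m + 1) q from rfl,
      ih (fun w => G (q :: w))]
    rw [Finset.sum_range_succ' (fun i =>
        SG (fun w => G (List.replicate i q ++ c :: w)) (List.replicate (m + 1 - i) q) v) (m + 1),
      Finset.sum_range_succ' (fun i =>
        SG (fun w => G (List.replicate i q ++ (q + c) :: w)) (List.replicate (m + 1 - 1 - i) q) v) m]
    have hA : (∑ i ∈ Finset.range (m + 1),
          SG (fun w => G (q :: (List.replicate i q ++ c :: w))) (List.replicate (m - i) q) v)
        = ∑ i ∈ Finset.range (m + 1),
            SG (fun w => G (List.replicate (i + 1) q ++ c :: w)) (List.replicate (m + 1 - (i + 1)) q) v := by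
      refine Finset.sum_congr rfl fun i hi => ?_
      rw [show m + 1 - (i + 1) = m - i from by omega]
      rfl
    have hB : (∑ i ∈ Finset.range m,
          SG (fun w => G (q :: (List.replicate i q ++ (q + c) :: w))) (List.replicate (m - 1 - i) q) v)
        = ∑ i ∈ Finset.range m,
            SG (fun w => G (List.replicate (i + 1) q ++ (q + c) :: w)) (List.replicate (m + 1 - 1 - (i + 1)) q) v := by
      refine Finset.sum_congr rfl fun i hi => ?_
      rw [show m + 1 - 1 - (i + 1) = m - 1 - i from by omega]
      rfl
    have hC : SG (fun w => G (c :: w)) (List.replicate (m + 1) q) v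
        = SG (fun w => G (List.replicate 0 q ++ c :: w)) (List.replicate (m + 1 - 0) q) v := by
      rw [show m + 1 - 0 = m + 1 from by omega]
      rfl
    have hD : SG (fun w => G ((q + c) :: w)) (List.replicate m q) v
        = SG (fun w => G (List.replicate 0 q ++ (q + c) :: w)) (List.replicate (m + 1 - 1 - 0) q) v := by
      rw [show m + 1 - 1 - 0 = m from by omega]
      rfl
    rw [hA, hB, hC, hD]
    abel

lemma sum_Icc_one {M : Type*} [AddCommMonoid M] (m : ℕ) (f : ℕ → M) :
    ∑ i ∈ Finset.Icc 1 m, f i = ∑ i ∈ Finset.range m, f (i + 1) := by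
  have h : Finset.Icc 1 m = Finset.map ⟨fun i => i + 1, add_left_injective 1⟩ (Finset.range m) := by
    ext t
    simp only [Finset.mem_Icc, Finset.mem_map, Finset.mem_range, Function.Embedding.coeFn_mk]
    constructor
    · rintro ⟨h1, h2⟩; exact ⟨t - 1, by omega, by omega⟩
    · rintro ⟨i, hi, rfl⟩; omega
  rw [h, Finset.sum_map]
  rfl

lemma branch (q c m n : ℕ) (G : List ℕ → ℝ≥0∞) :
    SG G (List.replicate m q) (c :: List.replicate n q)
      = (∑ i ∈ Finset.Icc 1 m, ∑ j ∈ Finset.range (min (m - i) n + 1),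
          ∑ S ∈ Finset.powersetCard j (Finset.univ : Finset (Fin (m + n - i - 2 * j + j))),
            (((m + n - i - 2 * j).choose (n - j) : ℕ) : ℝ≥0∞) *
              (G (List.replicate i q ++ c :: strA q S)
                + G (List.replicate (i - 1) q ++ (q + c) :: strA q S)))
        + ∑ j ∈ Finset.range (min m n + 1),
            ∑ S ∈ Finset.powersetCard j (Finset.univ : Finset (Fin (m + n - 2 * j + j))),
              (((m + n - 2 * j).choose (n - j) : ℕ) : ℝ≥0∞) * G (c :: strA q S) := by
  rw [sumB]
  have h1 : ∀ i, SG (fun w => G (List.replicate i q ++ c :: w))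
        (List.replicate (m - i) q) (List.replicate n q)
      = ∑ j ∈ Finset.range (min (m - i) n + 1),
          (((m - i + n - 2 * j).choose (n - j) : ℕ) : ℝ≥0∞) *
            ∑ S ∈ Finset.powersetCard j
              (Finset.univ : Finset (Fin (m - i + n - 2 * j + j))),
              G (List.replicate i q ++ c :: strA q S) :=
    fun i => sumC q (m - i) n _
  have h2 : ∀ i, SG (fun w => G (List.replicate i q ++ (q + c) :: w))
        (List.replicate (m - 1 - i) q) (List.replicate n q)
      = ∑ j ∈ Finset.range (min (m - 1 - i) n + 1),
          (((m - 1 - i + n - 2 * j).choose (n - j) : ℕ) : ℝ≥0∞) *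
            ∑ S ∈ Finset.powersetCard j
              (Finset.univ : Finset (Fin (m - 1 - i + n - 2 * j + j))),
              G (List.replicate i q ++ (q + c) :: strA q S) :=
    fun i => sumC q (m - 1 - i) n _
  rw [Finset.sum_congr rfl (fun i _ => h1 i), Finset.sum_congr rfl (fun i _ => h2 i),
    Finset.sum_range_succ' (fun i => ∑ j ∈ Finset.range (min (m - i) n + 1),
      (((m - i + n - 2 * j).choose (n - j) : ℕ) : ℝ≥0∞) *
        ∑ S ∈ Finset.powersetCard j
          (Finset.univ : Finset (Fin (m - i + n - 2 * j + j))),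
          G (List.replicate i q ++ c :: strA q S)) m]
  have hzero : (∑ j ∈ Finset.range (min (m - 0) n + 1),
        (((m - 0 + n - 2 * j).choose (n - j) : ℕ) : ℝ≥0∞) *
          ∑ S ∈ Finset.powersetCard j
            (Finset.univ : Finset (Fin (m - 0 + n - 2 * j + j))),
            G (List.replicate 0 q ++ c :: strA q S))
      = ∑ j ∈ Finset.range (min m n + 1),
          ∑ S ∈ Finset.powersetCard j (Finset.univ : Finset (Fin (m + n - 2 * j + j))),
            (((m + n - 2 * j).choose (n - j) : ℕ) : ℝ≥0∞) * G (c :: strA q S) := by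
    rw [show m - 0 = m from by omega]
    refine Finset.sum_congr rfl fun j hj => ?_
    rw [Finset.mul_sum]
    rfl
  have hshift1 : (∑ i ∈ Finset.range m, ∑ j ∈ Finset.range (min (m - (i + 1)) n + 1),
        (((m - (i + 1) + n - 2 * j).choose (n - j) : ℕ) : ℝ≥0∞) *
          ∑ S ∈ Finset.powersetCard j
            (Finset.univ : Finset (Fin (m - (i + 1) + n - 2 * j + j))),
            G (List.replicate (i + 1) q ++ c :: strA q S))
      = ∑ i ∈ Finset.Icc 1 m, ∑ j ∈ Finset.range (min (m - i) n + 1),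
          ∑ S ∈ Finset.powersetCard j
            (Finset.univ : Finset (Fin (m + n - i - 2 * j + j))),
            (((m + n - i - 2 * j).choose (n - j) : ℕ) : ℝ≥0∞) *
              G (List.replicate i q ++ c :: strA q S) := by
    rw [sum_Icc_one m (fun i => ∑ j ∈ Finset.range (min (m - i) n + 1),
      ∑ S ∈ Finset.powersetCard j
        (Finset.univ : Finset (Fin (m + n - i - 2 * j + j))),
        (((m + n - i - 2 * j).choose (n - j) : ℕ) : ℝ≥0∞) *
          G (List.replicate i q ++ c :: strA q S))]
    refine Finset.sum_congr rfl fun i hi => ?_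
    rw [Finset.mem_range] at hi
    refine Finset.sum_congr rfl fun j hj => ?_
    rw [show m - (i + 1) + n - 2 * j = m + n - (i + 1) - 2 * j from by omega,
      show m + n - (i + 1) - 2 * j + j = m + n - (i + 1) - 2 * j + j from rfl,
      Finset.mul_sum]
  have hshift2 : (∑ i ∈ Finset.range m, ∑ j ∈ Finset.range (min (m - 1 - i) n + 1),
        (((m - 1 - i + n - 2 * j).choose (n - j) : ℕ) : ℝ≥0∞) *
          ∑ S ∈ Finset.powersetCard j
            (Finset.univ : Finset (Fin (m - 1 - i + n - 2 * j + j))),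
            G (List.replicate i q ++ (q + c) :: strA q S))
      = ∑ i ∈ Finset.Icc 1 m, ∑ j ∈ Finset.range (min (m - i) n + 1),
          ∑ S ∈ Finset.powersetCard j
            (Finset.univ : Finset (Fin (m + n - i - 2 * j + j))),
            (((m + n - i - 2 * j).choose (n - j) : ℕ) : ℝ≥0∞) *
              G (List.replicate (i - 1) q ++ (q + c) :: strA q S) := by
    rw [sum_Icc_one m (fun i => ∑ j ∈ Finset.range (min (m - i) n + 1),
      ∑ S ∈ Finset.powersetCard j
        (Finset.univ : Finset (Fin (m + n - i - 2 * j + j))),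
        (((m + n - i - 2 * j).choose (n - j) : ℕ) : ℝ≥0∞) *
          G (List.replicate (i - 1) q ++ (q + c) :: strA q S))]
    refine Finset.sum_congr rfl fun i hi => ?_
    rw [Finset.mem_range] at hi
    rw [show m - 1 - i = m - (i + 1) from by omega]
    refine Finset.sum_congr rfl fun j hj => ?_
    rw [show m - (i + 1) + n - 2 * j = m + n - (i + 1) - 2 * j from by omega,
      show (i + 1) - 1 = i from by omega, Finset.mul_sum]
  rw [hzero, hshift1, hshift2, add_right_comm]
  congr 1
  rw [← Finset.sum_add_distrib]
  refine Finset.sum_congr rfl fun i _ => ?_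
  rw [← Finset.sum_add_distrib]
  refine Finset.sum_congr rfl fun j _ => ?_
  rw [← Finset.sum_add_distrib]
  refine Finset.sum_congr rfl fun S _ => ?_
  rw [mul_add]

lemma strA_all_two_le {N : ℕ} {q : ℕ} (hq : 2 ≤ q) (S : Finset (Fin N)) :
    ∀ c ∈ strA q S, 2 ≤ c := by
  intro c hc
  rw [strA, List.mem_ofFn] at hc
  obtain ⟨t, ht⟩ := hc
  change (if t ∈ S then 2 * q else q) = c at ht
  by_cases h : t ∈ S
  · rw [if_pos h] at ht; omega
  · rw [if_neg h] at ht; omega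

lemma word_ok {q z c0 : ℕ} (hq : 2 ≤ q) (hz : 2 ≤ z) (hc0 : 2 ≤ c0) (i : ℕ) {N : ℕ}
    (S : Finset (Fin N)) : ∀ c' ∈ z :: (List.replicate i q ++ c0 :: strA q S), 2 ≤ c' := by
  intro c' hc'
  simp only [List.mem_cons, List.mem_append] at hc'
  rcases hc' with rfl | (h | (rfl | h))
  · exact hz
  · have := List.eq_of_mem_replicate h; omega
  · exact hc0
  · exact strA_all_two_le hq S _ h

lemma word_ok2 {q z : ℕ} (hq : 2 ≤ q) (hz : 2 ≤ z) {N : ℕ} (S : Finset (Fin N)) :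
    ∀ c' ∈ z :: strA q S, 2 ≤ c' := by
  intro c' hc'
  rcases List.mem_cons.1 hc' with rfl | h
  · exact hz
  · exact strA_all_two_le hq S _ h

theorem key (k l p m n : ℕ) :
    Z (k :: List.replicate m p) ⊤ * Z (l :: List.replicate n p) ⊤
      = (∑ i ∈ Finset.Icc 1 m, ∑ j ∈ Finset.range (min (m - i) n + 1),
          ∑ S ∈ Finset.powersetCard j (Finset.univ : Finset (Fin (m + n - i - 2 * j + j))),
            (((m + n - i - 2 * j).choose (n - j) : ℕ) : ℝ≥0∞) *
              (Z (k :: (List.replicate i p ++ l :: strA p S)) ⊤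
                + Z (k :: (List.replicate (i - 1) p ++ (p + l) :: strA p S)) ⊤))
        + (∑ i ∈ Finset.Icc 1 n, ∑ j ∈ Finset.range (min m (n - i) + 1),
            ∑ S ∈ Finset.powersetCard j (Finset.univ : Finset (Fin (m + n - i - 2 * j + j))),
              (((m + n - i - 2 * j).choose (m - j) : ℕ) : ℝ≥0∞) *
                (Z (l :: (List.replicate i p ++ k :: strA p S)) ⊤
                  + Z (l :: (List.replicate (i - 1) p ++ (p + k) :: strA p S)) ⊤))
        + ∑ j ∈ Finset.range (min m n + 1),
            ∑ S ∈ Finset.powersetCard j (Finset.univ : Finset (Fin (m + n - 2 * j + j))),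
              (((m + n - 2 * j).choose (m - j) : ℕ) : ℝ≥0∞) *
                (Z (k :: l :: strA p S) ⊤ + Z (l :: k :: strA p S) ⊤
                  + Z ((k + l) :: strA p S) ⊤) := by
  rw [show (k :: List.replicate m p) = k :: List.replicate m p from rfl, Z_mul, SG_cons_cons,
    branch p l m n (fun w => Z (k :: w) ⊤),
    SG_comm (fun w => Z (l :: w) ⊤) (k :: List.replicate m p) (List.replicate n p),
    branch p k n m (fun w => Z (l :: w) ⊤),
    sumC p m n (fun w => Z ((k + l) :: w) ⊤)]
  -- name the three target pieces
  have hB1 : (∑ i ∈ Finset.Icc 1 n, ∑ j ∈ Finset.range (min (n - i) m + 1),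
        ∑ S ∈ Finset.powersetCard j (Finset.univ : Finset (Fin (n + m - i - 2 * j + j))),
          (((n + m - i - 2 * j).choose (m - j) : ℕ) : ℝ≥0∞) *
            (Z (l :: (List.replicate i p ++ k :: strA p S)) ⊤
              + Z (l :: (List.replicate (i - 1) p ++ (p + k) :: strA p S)) ⊤))
      = ∑ i ∈ Finset.Icc 1 n, ∑ j ∈ Finset.range (min m (n - i) + 1),
          ∑ S ∈ Finset.powersetCard j (Finset.univ : Finset (Fin (m + n - i - 2 * j + j))),
            (((m + n - i - 2 * j).choose (m - j) : ℕ) : ℝ≥0∞) *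
              (Z (l :: (List.replicate i p ++ k :: strA p S)) ⊤
                + Z (l :: (List.replicate (i - 1) p ++ (p + k) :: strA p S)) ⊤) := by
    refine Finset.sum_congr rfl fun i hi => ?_
    rw [Finset.mem_Icc] at hi
    rw [min_comm (n - i) m, show n + m - i = m + n - i from by omega]
  have hA3 : (∑ j ∈ Finset.range (min m n + 1),
        ∑ S ∈ Finset.powersetCard j (Finset.univ : Finset (Fin (m + n - 2 * j + j))),
          (((m + n - 2 * j).choose (n - j) : ℕ) : ℝ≥0∞) * Z (k :: l :: strA p S) ⊤)
      = ∑ j ∈ Finset.range (min m n + 1),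
          ∑ S ∈ Finset.powersetCard j (Finset.univ : Finset (Fin (m + n - 2 * j + j))),
            (((m + n - 2 * j).choose (m - j) : ℕ) : ℝ≥0∞) * Z (k :: l :: strA p S) ⊤ := by
    refine Finset.sum_congr rfl fun j hj => ?_
    rw [Finset.mem_range] at hj
    rw [show (m + n - 2 * j).choose (n - j) = (m + n - 2 * j).choose (m - j) from by
      rw [show n - j = (m + n - 2 * j) - (m - j) from by omega, Nat.choose_symm (by omega)]]
  have hB3 : (∑ j ∈ Finset.range (min n m + 1),
        ∑ S ∈ Finset.powersetCard j (Finset.univ : Finset (Fin (n + m - 2 * j + j))),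
          (((n + m - 2 * j).choose (m - j) : ℕ) : ℝ≥0∞) * Z (l :: k :: strA p S) ⊤)
      = ∑ j ∈ Finset.range (min m n + 1),
          ∑ S ∈ Finset.powersetCard j (Finset.univ : Finset (Fin (m + n - 2 * j + j))),
            (((m + n - 2 * j).choose (m - j) : ℕ) : ℝ≥0∞) * Z (l :: k :: strA p S) ⊤ := by
    rw [min_comm n m, show n + m = m + n from by omega]
  have hC3 : (∑ j ∈ Finset.range (min m n + 1),
        (((m + n - 2 * j).choose (n - j) : ℕ) : ℝ≥0∞) *
          ∑ S ∈ Finset.powersetCard j (Finset.univ : Finset (Fin (m + n - 2 * j + j))),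
            Z ((k + l) :: strA p S) ⊤)
      = ∑ j ∈ Finset.range (min m n + 1),
          ∑ S ∈ Finset.powersetCard j (Finset.univ : Finset (Fin (m + n - 2 * j + j))),
            (((m + n - 2 * j).choose (m - j) : ℕ) : ℝ≥0∞) * Z ((k + l) :: strA p S) ⊤ := by
    refine Finset.sum_congr rfl fun j hj => ?_
    rw [Finset.mem_range] at hj
    rw [show (m + n - 2 * j).choose (n - j) = (m + n - 2 * j).choose (m - j) from by
      rw [show n - j = (m + n - 2 * j) - (m - j) from by omega, Nat.choose_symm (by omega)],
      Finset.mul_sum]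
  have hT3 : (∑ j ∈ Finset.range (min m n + 1),
        ∑ S ∈ Finset.powersetCard j (Finset.univ : Finset (Fin (m + n - 2 * j + j))),
          (((m + n - 2 * j).choose (m - j) : ℕ) : ℝ≥0∞) *
            (Z (k :: l :: strA p S) ⊤ + Z (l :: k :: strA p S) ⊤
              + Z ((k + l) :: strA p S) ⊤))
      = (∑ j ∈ Finset.range (min m n + 1),
          ∑ S ∈ Finset.powersetCard j (Finset.univ : Finset (Fin (m + n - 2 * j + j))),
            (((m + n - 2 * j).choose (m - j) : ℕ) : ℝ≥0∞) * Z (k :: l :: strA p S) ⊤)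
        + (∑ j ∈ Finset.range (min m n + 1),
            ∑ S ∈ Finset.powersetCard j (Finset.univ : Finset (Fin (m + n - 2 * j + j))),
              (((m + n - 2 * j).choose (m - j) : ℕ) : ℝ≥0∞) * Z (l :: k :: strA p S) ⊤)
        + ∑ j ∈ Finset.range (min m n + 1),
            ∑ S ∈ Finset.powersetCard j (Finset.univ : Finset (Fin (m + n - 2 * j + j))),
              (((m + n - 2 * j).choose (m - j) : ℕ) : ℝ≥0∞) * Z ((k + l) :: strA p S) ⊤ := by
    rw [← Finset.sum_add_distrib, ← Finset.sum_add_distrib]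
    refine Finset.sum_congr rfl fun j _ => ?_
    rw [← Finset.sum_add_distrib, ← Finset.sum_add_distrib]
    refine Finset.sum_congr rfl fun S _ => ?_
    rw [mul_add, mul_add]
  rw [hB1, hA3, hB3, hC3, hT3]
  abel

end MzvAux

theorem mzv_stuffle_one_one (k l p : ℕ) (hk : 2 ≤ k) (hl : 2 ≤ l) (hp : 2 ≤ p) (m n : ℕ) :
    mzv (k :: List.replicate m p) * mzv (l :: List.replicate n p) =
      (∑ i ∈ Finset.Icc 1 m, ∑ j ∈ Finset.range (min (m - i) n + 1),
        ∑ S ∈ Finset.powersetCard j (Finset.univ : Finset (Fin (m + n - i - 2 * j + j))),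
          (Nat.choose (m + n - i - 2 * j) (n - j) : ℝ) *
            (mzv (k :: (List.replicate i p ++ l :: strA p S))
              + mzv (k :: (List.replicate (i - 1) p ++ (p + l) :: strA p S))))
      + (∑ i ∈ Finset.Icc 1 n, ∑ j ∈ Finset.range (min m (n - i) + 1),
        ∑ S ∈ Finset.powersetCard j (Finset.univ : Finset (Fin (m + n - i - 2 * j + j))),
          (Nat.choose (m + n - i - 2 * j) (m - j) : ℝ) *
            (mzv (l :: (List.replicate i p ++ k :: strA p S))
              + mzv (l :: (List.replicate (i - 1) p ++ (p + k) :: strA p S))))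
      + (∑ j ∈ Finset.range (min m n + 1),
        ∑ S ∈ Finset.powersetCard j (Finset.univ : Finset (Fin (m + n - 2 * j + j))),
          (Nat.choose (m + n - 2 * j) (m - j) : ℝ) *
            (mzv (k :: l :: strA p S) + mzv (l :: k :: strA p S)
              + mzv ((k + l) :: strA p S))) := by
  classical
  have hrep : ∀ (z i : ℕ), 2 ≤ z → ∀ c ∈ z :: List.replicate i p, 2 ≤ c := by
    intro z i hz c hc
    rcases List.mem_cons.1 hc with rfl | h
    · exact hz
    · have := List.eq_of_mem_replicate h; omega
  have fin1 : ∀ {N : ℕ} (i : ℕ) (S : Finset (Fin N)),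
      MzvAux.Z (k :: (List.replicate i p ++ l :: strA p S)) ⊤ ≠ ⊤ :=
    fun i S => MzvAux.Z_ne_top _ (MzvAux.word_ok hp hk hl i S) ⊤
  have fin2 : ∀ {N : ℕ} (i : ℕ) (S : Finset (Fin N)),
      MzvAux.Z (k :: (List.replicate i p ++ (p + l) :: strA p S)) ⊤ ≠ ⊤ :=
    fun i S => MzvAux.Z_ne_top _ (MzvAux.word_ok hp hk (by omega) i S) ⊤
  have fin3 : ∀ {N : ℕ} (i : ℕ) (S : Finset (Fin N)),
      MzvAux.Z (l :: (List.replicate i p ++ k :: strA p S)) ⊤ ≠ ⊤ :=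
    fun i S => MzvAux.Z_ne_top _ (MzvAux.word_ok hp hl hk i S) ⊤
  have fin4 : ∀ {N : ℕ} (i : ℕ) (S : Finset (Fin N)),
      MzvAux.Z (l :: (List.replicate i p ++ (p + k) :: strA p S)) ⊤ ≠ ⊤ :=
    fun i S => MzvAux.Z_ne_top _ (MzvAux.word_ok hp hl (by omega) i S) ⊤
  have fin5 : ∀ {N : ℕ} (S : Finset (Fin N)), MzvAux.Z (k :: l :: strA p S) ⊤ ≠ ⊤ :=
    fun S => MzvAux.Z_ne_top _ (MzvAux.word_ok hp hk hl 0 S) ⊤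
  have fin6 : ∀ {N : ℕ} (S : Finset (Fin N)), MzvAux.Z (l :: k :: strA p S) ⊤ ≠ ⊤ :=
    fun S => MzvAux.Z_ne_top _ (MzvAux.word_ok hp hl hk 0 S) ⊤
  have fin7 : ∀ {N : ℕ} (S : Finset (Fin N)), MzvAux.Z ((k + l) :: strA p S) ⊤ ≠ ⊤ :=
    fun S => MzvAux.Z_ne_top _ (MzvAux.word_ok2 hp (by omega) S) ⊤
  rw [MzvAux.mzv_eq, MzvAux.mzv_eq, ← ENNReal.toReal_mul, MzvAux.key k l p m n]
  rw [ENNReal.toReal_add, ENNReal.toReal_add]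
  · congr 1
    · congr 1
      · rw [ENNReal.toReal_sum (fun i _ => by
          refine (ENNReal.sum_lt_top.2 fun j _ => ENNReal.sum_lt_top.2 fun S _ => ?_).ne
          exact (ENNReal.mul_ne_top (ENNReal.natCast_ne_top _)
            (ENNReal.add_ne_top.2 ⟨fin1 i S, fin2 (i - 1) S⟩)).lt_top)]
        refine Finset.sum_congr rfl fun i _ => ?_
        rw [ENNReal.toReal_sum (fun j _ => by
          refine (ENNReal.sum_lt_top.2 fun S _ => ?_).ne
          exact (ENNReal.mul_ne_top (ENNReal.natCast_ne_top _)
            (ENNReal.add_ne_top.2 ⟨fin1 i S, fin2 (i - 1) S⟩)).lt_top)]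
        refine Finset.sum_congr rfl fun j _ => ?_
        rw [ENNReal.toReal_sum (fun S _ => ENNReal.mul_ne_top (ENNReal.natCast_ne_top _)
          (ENNReal.add_ne_top.2 ⟨fin1 i S, fin2 (i - 1) S⟩))]
        refine Finset.sum_congr rfl fun S _ => ?_
        rw [ENNReal.toReal_mul, ENNReal.toReal_add (fin1 i S) (fin2 (i - 1) S),
          ENNReal.toReal_natCast, MzvAux.mzv_eq, MzvAux.mzv_eq]
      · rw [ENNReal.toReal_sum (fun i _ => by
          refine (ENNReal.sum_lt_top.2 fun j _ => ENNReal.sum_lt_top.2 fun S _ => ?_).ne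
          exact (ENNReal.mul_ne_top (ENNReal.natCast_ne_top _)
            (ENNReal.add_ne_top.2 ⟨fin3 i S, fin4 (i - 1) S⟩)).lt_top)]
        refine Finset.sum_congr rfl fun i _ => ?_
        rw [ENNReal.toReal_sum (fun j _ => by
          refine (ENNReal.sum_lt_top.2 fun S _ => ?_).ne
          exact (ENNReal.mul_ne_top (ENNReal.natCast_ne_top _)
            (ENNReal.add_ne_top.2 ⟨fin3 i S, fin4 (i - 1) S⟩)).lt_top)]
        refine Finset.sum_congr rfl fun j _ => ?_
        rw [ENNReal.toReal_sum (fun S _ => ENNReal.mul_ne_top (ENNReal.natCast_ne_top _)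
          (ENNReal.add_ne_top.2 ⟨fin3 i S, fin4 (i - 1) S⟩))]
        refine Finset.sum_congr rfl fun S _ => ?_
        rw [ENNReal.toReal_mul, ENNReal.toReal_add (fin3 i S) (fin4 (i - 1) S),
          ENNReal.toReal_natCast, MzvAux.mzv_eq, MzvAux.mzv_eq]
    · rw [ENNReal.toReal_sum (fun j _ => by
        refine (ENNReal.sum_lt_top.2 fun S _ => ?_).ne
        exact (ENNReal.mul_ne_top (ENNReal.natCast_ne_top _)
          (ENNReal.add_ne_top.2 ⟨ENNReal.add_ne_top.2 ⟨fin5 S, fin6 S⟩, fin7 S⟩)).lt_top)]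
      refine Finset.sum_congr rfl fun j _ => ?_
      rw [ENNReal.toReal_sum (fun S _ => ENNReal.mul_ne_top (ENNReal.natCast_ne_top _)
        (ENNReal.add_ne_top.2 ⟨ENNReal.add_ne_top.2 ⟨fin5 S, fin6 S⟩, fin7 S⟩))]
      refine Finset.sum_congr rfl fun S _ => ?_
      rw [ENNReal.toReal_mul,
        ENNReal.toReal_add (ENNReal.add_ne_top.2 ⟨fin5 S, fin6 S⟩) (fin7 S),
        ENNReal.toReal_add (fin5 S) (fin6 S),
        ENNReal.toReal_natCast, MzvAux.mzv_eq, MzvAux.mzv_eq, MzvAux.mzv_eq]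
  · exact (ENNReal.sum_lt_top.2 fun i _ => ENNReal.sum_lt_top.2 fun j _ =>
      ENNReal.sum_lt_top.2 fun S _ => (ENNReal.mul_ne_top (ENNReal.natCast_ne_top _)
        (ENNReal.add_ne_top.2 ⟨fin1 i S, fin2 (i - 1) S⟩)).lt_top).ne
  · exact (ENNReal.sum_lt_top.2 fun i _ => ENNReal.sum_lt_top.2 fun j _ =>
      ENNReal.sum_lt_top.2 fun S _ => (ENNReal.mul_ne_top (ENNReal.natCast_ne_top _)
        (ENNReal.add_ne_top.2 ⟨fin3 i S, fin4 (i - 1) S⟩)).lt_top).ne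
  · exact ENNReal.add_ne_top.2 ⟨(ENNReal.sum_lt_top.2 fun i _ => ENNReal.sum_lt_top.2 fun j _ =>
      ENNReal.sum_lt_top.2 fun S _ => (ENNReal.mul_ne_top (ENNReal.natCast_ne_top _)
        (ENNReal.add_ne_top.2 ⟨fin1 i S, fin2 (i - 1) S⟩)).lt_top).ne, (ENNReal.sum_lt_top.2 fun i _ => ENNReal.sum_lt_top.2 fun j _ =>
      ENNReal.sum_lt_top.2 fun S _ => (ENNReal.mul_ne_top (ENNReal.natCast_ne_top _)
        (ENNReal.add_ne_top.2 ⟨fin3 i S, fin4 (i - 1) S⟩)).lt_top).ne⟩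
  · exact (ENNReal.sum_lt_top.2 fun j _ => ENNReal.sum_lt_top.2 fun S _ =>
      (ENNReal.mul_ne_top (ENNReal.natCast_ne_top _)
        (ENNReal.add_ne_top.2 ⟨ENNReal.add_ne_top.2 ⟨fin5 S, fin6 S⟩, fin7 S⟩)).lt_top).ne
end
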